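/- arXiv:1702.00102 — 8 statements merged into one kernel-verified Lean document; each statement's English description precedes it below -/
import Mathlib

section
/- Let Δ' ⊂ ℝ³ be the convex hull of the seven points (0,2,−1), (−1,1,−1), (−1,−1,−1), (5,−1,−1), (4,0,−1), (1,0,0), (−1,−1,1). Then Δ' contains the origin in its interior and its polar dual (Δ')* equals the convex hull of the seven integer points (0,0,1), (−1,−2,−3), (−1,−3,−5), (1,−1,−1), (1,0,0), (0,1,0), (−1,−1,−3); in particular Δ' is a reflexive polytope. -/
set_option maxHeartbeats 1000000

/-- Membership in a convex hull via an explicit 4-point convex combination. -/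
lemma mem4_aux {s : Set (Fin 3 → ℝ)} {p0 p1 p2 p3 : Fin 3 → ℝ}
    (h0 : p0 ∈ s) (h1 : p1 ∈ s) (h2 : p2 ∈ s) (h3 : p3 ∈ s)
    {w0 w1 w2 w3 : ℝ} (hw0 : 0 ≤ w0) (hw1 : 0 ≤ w1) (hw2 : 0 ≤ w2) (hw3 : 0 ≤ w3)
    (hsum : w0 + w1 + w2 + w3 = 1) :
    w0 • p0 + w1 • p1 + w2 • p2 + w3 • p3 ∈ convexHull ℝ s := by
  have hmem := Finset.centerMass_mem_convexHull (Finset.univ : Finset (Fin 4))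
    (w := ![w0, w1, w2, w3]) (z := ![p0, p1, p2, p3])
    (by intro i _; fin_cases i <;> assumption)
    (by simp [Fin.sum_univ_four]; linarith)
    (by intro i _; fin_cases i <;> assumption)
  rwa [Finset.centerMass_eq_of_sum_1 _ _ (by simp [Fin.sum_univ_four, hsum]),
    Fin.sum_univ_four] at hmem

/-- Half-spaces of the given form are convex. -/
lemma halfspace_conv (t : Fin 3 → ℝ) :
    Convex ℝ {x : Fin 3 → ℝ | -1 ≤ ∑ i, t i * x i} := by
  intro x hx y hy a b ha hb hab
  simp only [Set.mem_setOf_eq, Fin.sum_univ_three] at hx hy ⊢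
  simp only [Pi.add_apply, Pi.smul_apply, smul_eq_mul]
  nlinarith [mul_le_mul_of_nonneg_left hx ha, mul_le_mul_of_nonneg_left hy hb]

/-- The polytope Δ' contains the origin in its interior and its polar dual
is the convex hull of the listed integer points; in particular Δ' is reflexive. -/
theorem stmt_0 :
    let Δ' : Set (Fin 3 → ℝ) := convexHull ℝ ({![0,2,-1], ![-1,1,-1], ![-1,-1,-1], ![5,-1,-1], ![4,0,-1], ![1,0,0], ![-1,-1,1]} : Set (Fin 3 → ℝ))
    (0 : Fin 3 → ℝ) ∈ interior Δ' ∧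
    {y : Fin 3 → ℝ | ∀ x ∈ Δ', -1 ≤ ∑ i, y i * x i} =
      convexHull ℝ ({![0,0,1], ![-1,-2,-3], ![-1,-3,-5], ![1,-1,-1], ![1,0,0], ![0,1,0], ![-1,-1,-3]} : Set (Fin 3 → ℝ)) := by
  intro Δ'
  -- memberships of the primal vertices in S
  have hm1 : (![0,2,-1] : Fin 3 → ℝ) ∈ ({![0,2,-1], ![-1,1,-1], ![-1,-1,-1], ![5,-1,-1], ![4,0,-1], ![1,0,0], ![-1,-1,1]} : Set (Fin 3 → ℝ)) := by left; rfl
  have hm2 : (![-1,1,-1] : Fin 3 → ℝ) ∈ ({![0,2,-1], ![-1,1,-1], ![-1,-1,-1], ![5,-1,-1], ![4,0,-1], ![1,0,0], ![-1,-1,1]} : Set (Fin 3 → ℝ)) := by right; left; rfl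
  have hm3 : (![-1,-1,-1] : Fin 3 → ℝ) ∈ ({![0,2,-1], ![-1,1,-1], ![-1,-1,-1], ![5,-1,-1], ![4,0,-1], ![1,0,0], ![-1,-1,1]} : Set (Fin 3 → ℝ)) := by right; right; left; rfl
  have hm4 : (![5,-1,-1] : Fin 3 → ℝ) ∈ ({![0,2,-1], ![-1,1,-1], ![-1,-1,-1], ![5,-1,-1], ![4,0,-1], ![1,0,0], ![-1,-1,1]} : Set (Fin 3 → ℝ)) := by right; right; right; left; rfl
  have hm5 : (![4,0,-1] : Fin 3 → ℝ) ∈ ({![0,2,-1], ![-1,1,-1], ![-1,-1,-1], ![5,-1,-1], ![4,0,-1], ![1,0,0], ![-1,-1,1]} : Set (Fin 3 → ℝ)) := by right; right; right; right; left; rfl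
  have hm6 : (![1,0,0] : Fin 3 → ℝ) ∈ ({![0,2,-1], ![-1,1,-1], ![-1,-1,-1], ![5,-1,-1], ![4,0,-1], ![1,0,0], ![-1,-1,1]} : Set (Fin 3 → ℝ)) := by right; right; right; right; right; left; rfl
  have hm7 : (![-1,-1,1] : Fin 3 → ℝ) ∈ ({![0,2,-1], ![-1,1,-1], ![-1,-1,-1], ![5,-1,-1], ![4,0,-1], ![1,0,0], ![-1,-1,1]} : Set (Fin 3 → ℝ)) := by right; right; right; right; right; right; rfl
  -- memberships of the dual vertices in T
  have hn1 : (![0,0,1] : Fin 3 → ℝ) ∈ ({![0,0,1], ![-1,-2,-3], ![-1,-3,-5], ![1,-1,-1], ![1,0,0], ![0,1,0], ![-1,-1,-3]} : Set (Fin 3 → ℝ)) := by left; rfl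
  have hn2 : (![-1,-2,-3] : Fin 3 → ℝ) ∈ ({![0,0,1], ![-1,-2,-3], ![-1,-3,-5], ![1,-1,-1], ![1,0,0], ![0,1,0], ![-1,-1,-3]} : Set (Fin 3 → ℝ)) := by right; left; rfl
  have hn3 : (![-1,-3,-5] : Fin 3 → ℝ) ∈ ({![0,0,1], ![-1,-2,-3], ![-1,-3,-5], ![1,-1,-1], ![1,0,0], ![0,1,0], ![-1,-1,-3]} : Set (Fin 3 → ℝ)) := by right; right; left; rfl
  have hn4 : (![1,-1,-1] : Fin 3 → ℝ) ∈ ({![0,0,1], ![-1,-2,-3], ![-1,-3,-5], ![1,-1,-1], ![1,0,0], ![0,1,0], ![-1,-1,-3]} : Set (Fin 3 → ℝ)) := by right; right; right; left; rfl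
  have hn5 : (![1,0,0] : Fin 3 → ℝ) ∈ ({![0,0,1], ![-1,-2,-3], ![-1,-3,-5], ![1,-1,-1], ![1,0,0], ![0,1,0], ![-1,-1,-3]} : Set (Fin 3 → ℝ)) := by right; right; right; right; left; rfl
  have hn6 : (![0,1,0] : Fin 3 → ℝ) ∈ ({![0,0,1], ![-1,-2,-3], ![-1,-3,-5], ![1,-1,-1], ![1,0,0], ![0,1,0], ![-1,-1,-3]} : Set (Fin 3 → ℝ)) := by right; right; right; right; right; left; rfl
  have hn7 : (![-1,-1,-3] : Fin 3 → ℝ) ∈ ({![0,0,1], ![-1,-2,-3], ![-1,-3,-5], ![1,-1,-1], ![1,0,0], ![0,1,0], ![-1,-1,-3]} : Set (Fin 3 → ℝ)) := by right; right; right; right; right; right; rfl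
  constructor
  · -- origin in interior: it lies in the open interior of the tetrahedron v1 v2 v4 v7
    rw [mem_interior]
    refine ⟨{x : Fin 3 → ℝ | 0 < 1/4 + 1/4 * x 0 + 3/4 * x 1 + 3/4 * x 2 ∧
        0 < 1/8 - 3/8 * x 0 - 5/8 * x 1 - 9/8 * x 2 ∧
        0 < 1/8 + 1/8 * x 0 - 1/8 * x 1 - 1/8 * x 2 ∧
        0 < 1/2 + 1/2 * x 2}, ?_, ?_, ?_⟩
    · rintro x ⟨h1, h2, h3, h4⟩
      have hx : x = (1/4 + 1/4 * x 0 + 3/4 * x 1 + 3/4 * x 2) • (![0,2,-1] : Fin 3 → ℝ) +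
          (1/8 - 3/8 * x 0 - 5/8 * x 1 - 9/8 * x 2) • (![-1,1,-1] : Fin 3 → ℝ) +
          (1/8 + 1/8 * x 0 - 1/8 * x 1 - 1/8 * x 2) • (![5,-1,-1] : Fin 3 → ℝ) +
          (1/2 + 1/2 * x 2) • (![-1,-1,1] : Fin 3 → ℝ) := by
        funext i; fin_cases i <;> simp <;> ring
      rw [hx]
      exact mem4_aux hm1 hm2 hm4 hm7 h1.le h2.le h3.le h4.le (by ring)
    · exact (isOpen_lt continuous_const (by fun_prop)).and
        ((isOpen_lt continuous_const (by fun_prop)).and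
        ((isOpen_lt continuous_const (by fun_prop)).and
        (isOpen_lt continuous_const (by fun_prop))))
    · norm_num
  · apply Set.Subset.antisymm
    · -- hard direction: polar dual ⊆ convex hull of the dual vertices
      intro y hy
      have g1 : -1 ≤ y 1 * 2 - y 2 := by
        have := hy _ (subset_convexHull ℝ _ hm1); simp [Fin.sum_univ_three] at this; linarith
      have g2 : -1 ≤ -y 0 + y 1 - y 2 := by
        have := hy _ (subset_convexHull ℝ _ hm2); simp [Fin.sum_univ_three] at this; linarith
      have g3 : -1 ≤ -y 0 - y 1 - y 2 := by
        have := hy _ (subset_convexHull ℝ _ hm3); simp [Fin.sum_univ_three] at this; linarith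
      have g4 : -1 ≤ y 0 * 5 - y 1 - y 2 := by
        have := hy _ (subset_convexHull ℝ _ hm4); simp [Fin.sum_univ_three] at this; linarith
      have g5 : -1 ≤ y 0 * 4 - y 2 := by
        have := hy _ (subset_convexHull ℝ _ hm5); simp [Fin.sum_univ_three] at this; linarith
      have g6 : -1 ≤ y 0 := by
        have := hy _ (subset_convexHull ℝ _ hm6); simp [Fin.sum_univ_three] at this; linarith
      have g7 : -1 ≤ -y 0 - y 1 + y 2 := by
        have := hy _ (subset_convexHull ℝ _ hm7); simp [Fin.sum_univ_three] at this; linarith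
      by_cases c7 : 2 + 6 * y 0 + 2 * y 1 - 2 * y 2 ≤ 0
      · -- tetrahedron t1 t2 t3 t7
        have hyeq : y = (1 + y 0) • (![0,0,1] : Fin 3 → ℝ) +
            (-1 - 3 * y 0 - y 1 + y 2) • (![-1,-2,-3] : Fin 3 → ℝ) +
            (1/2 + 2 * y 0 - 1/2 * y 2) • (![-1,-3,-5] : Fin 3 → ℝ) +
            (1/2 + y 1 - 1/2 * y 2) • (![-1,-1,-3] : Fin 3 → ℝ) := by
          funext i; fin_cases i <;> simp <;> ring
        rw [hyeq]
        exact mem4_aux hn1 hn2 hn3 hn7 (by linarith) (by linarith) (by linarith)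
          (by linarith) (by ring)
      · push_neg at c7
        by_cases c6 : 1 + 9 * y 0 - y 1 - y 2 ≤ 0
        · -- tetrahedron t1 t3 t6 t7
          have hyeq : y = (1/2 - 1/2 * y 0 - 1/2 * y 1 + 1/2 * y 2) • (![0,0,1] : Fin 3 → ℝ) +
              (1/4 + 5/4 * y 0 - 1/4 * y 1 - 1/4 * y 2) • (![-1,-3,-5] : Fin 3 → ℝ) +
              (1/2 + 3/2 * y 0 + 1/2 * y 1 - 1/2 * y 2) • (![0,1,0] : Fin 3 → ℝ) +
              (-1/4 - 9/4 * y 0 + 1/4 * y 1 + 1/4 * y 2) • (![-1,-1,-3] : Fin 3 → ℝ) := by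
            funext i; fin_cases i <;> simp <;> ring
          rw [hyeq]
          exact mem4_aux hn1 hn3 hn6 hn7 (by linarith) (by linarith) (by linarith)
            (by linarith) (by ring)
        · push_neg at c6
          by_cases c5 : -3 + 3 * y 0 - 7 * y 1 + 3 * y 2 ≤ 0
          · -- tetrahedron t1 t3 t5 t6
            have hyeq : y = (1/2 - 1/2 * y 0 - 1/2 * y 1 + 1/2 * y 2) • (![0,0,1] : Fin 3 → ℝ) +
                (1/10 - 1/10 * y 0 - 1/10 * y 1 - 1/10 * y 2) • (![-1,-3,-5] : Fin 3 → ℝ) +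
                (1/10 + 9/10 * y 0 - 1/10 * y 1 - 1/10 * y 2) • (![1,0,0] : Fin 3 → ℝ) +
                (3/10 - 3/10 * y 0 + 7/10 * y 1 - 3/10 * y 2) • (![0,1,0] : Fin 3 → ℝ) := by
              funext i; fin_cases i <;> simp <;> ring
            rw [hyeq]
            exact mem4_aux hn1 hn3 hn5 hn6 (by linarith) (by linarith) (by linarith)
              (by linarith) (by ring)
          · push_neg at c5
            -- tetrahedron t1 t3 t4 t5
            have hyeq : y = (1/2 - 1/2 * y 0 - 1/2 * y 1 + 1/2 * y 2) • (![0,0,1] : Fin 3 → ℝ) +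
                (1/4 - 1/4 * y 0 + 1/4 * y 1 - 1/4 * y 2) • (![-1,-3,-5] : Fin 3 → ℝ) +
                (-3/4 + 3/4 * y 0 - 7/4 * y 1 + 3/4 * y 2) • (![1,-1,-1] : Fin 3 → ℝ) +
                (1 + 2 * y 1 - y 2) • (![1,0,0] : Fin 3 → ℝ) := by
              funext i; fin_cases i <;> simp <;> ring
            rw [hyeq]
            exact mem4_aux hn1 hn3 hn4 hn5 (by linarith) (by linarith) (by linarith)
              (by linarith) (by ring)
    · -- easy direction: convex hull of dual vertices ⊆ polar dual
      have hDconv : Convex ℝ {y : Fin 3 → ℝ | ∀ x ∈ Δ', -1 ≤ ∑ i, y i * x i} := by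
        intro y1 hy1 y2 hy2 a b ha hb hab
        intro x hx
        have A := hy1 x hx
        have B := hy2 x hx
        have hAB : ∑ i, (a • y1 + b • y2) i * x i =
            a * ∑ i, y1 i * x i + b * ∑ i, y2 i * x i := by
          simp [Fin.sum_univ_three]; ring
        rw [hAB]
        nlinarith [mul_le_mul_of_nonneg_left A ha, mul_le_mul_of_nonneg_left B hb]
      have key : ∀ t : Fin 3 → ℝ,
          (∀ v ∈ ({![0,2,-1], ![-1,1,-1], ![-1,-1,-1], ![5,-1,-1], ![4,0,-1], ![1,0,0], ![-1,-1,1]} : Set (Fin 3 → ℝ)), -1 ≤ ∑ i, t i * v i) →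
          ∀ x ∈ Δ', -1 ≤ ∑ i, t i * x i := by
        intro t ht x hx
        exact convexHull_min (fun v hv => ht v hv) (halfspace_conv t) hx
      refine convexHull_min ?_ hDconv
      rintro t ht
      simp only [Set.mem_setOf_eq]
      refine key t ?_
      rintro v hv
      simp only [Set.mem_insert_iff, Set.mem_singleton_iff] at ht hv
      rcases ht with rfl | rfl | rfl | rfl | rfl | rfl | rfl <;>
        rcases hv with rfl | rfl | rfl | rfl | rfl | rfl | rfl <;>
          norm_num [Fin.sum_univ_three, Matrix.cons_val_two]
end

section
/- Let Δ ⊂ ℝ³ be the convex hull of (−1,0,1), (−1,0,0), (0,1,−1), (2,3,−1), (2,2,−1), (1,−1,−1), (0,−1,−1) (a reflexive polytope). For every edge Γ of Δ, at least one of the following holds: the only points of ℤ³ on Γ are its two endpoints, or the only points of ℤ³ on the dual edge Γ* = {y ∈ Δ* : ⟨y, x⟩ = −1 for all x ∈ Γ} are its two endpoints. (Equivalently, l*(Γ)·l*(Γ*) = 0 for all edges Γ, so the sum Σ_Γ l*(Γ) l*(Γ*) over all edges of Δ vanishes.) -/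
open Set Module

lemma ext_end {v w : Fin 3 → ℝ} :
    v ∈ Set.extremePoints ℝ (segment ℝ v w) := by
  refine ⟨left_mem_segment ℝ v w, ?_⟩
  rintro x hx y hy hv
  rw [segment_eq_image'] at hx hy
  obtain ⟨s, hs, rfl⟩ := hx
  obtain ⟨t, ht, rfl⟩ := hy
  rw [openSegment_eq_image'] at hv
  obtain ⟨c, hc, hcv⟩ := hv
  simp only [] at hcv
  have h : (s + c * (t - s)) • (w - v) = 0 := by
    linear_combination (norm := module) hcv
  rcases smul_eq_zero.1 h with h0 | h0
  · have hs0 : s = 0 := by nlinarith [hs.1, hs.2, ht.1, ht.2, hc.1, hc.2]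
    have ht0 : t = 0 := by nlinarith [hs.1, hs.2, ht.1, ht.2, hc.1, hc.2]
    rw [hs0]; simp
  · rw [sub_eq_zero] at h0
    rw [← h0]
    simp


/-- A compact convex set of rank 1 is a nondegenerate segment. -/
lemma seg_struct {s : Set (Fin 3 → ℝ)} (hcomp : IsCompact s) (hconv : Convex ℝ s)
    (hrank : Module.finrank ℝ (vectorSpan ℝ s) = 1) :
    ∃ v w : Fin 3 → ℝ, v ≠ w ∧ s = segment ℝ v w := by
  -- s nonempty
  rcases s.eq_empty_or_nonempty with rfl | ⟨p₀, hp₀⟩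
  · rw [vectorSpan_empty] at hrank; simp at hrank
  have hcol : Collinear ℝ s := by
    rw [collinear_iff_finrank_le_one, hrank]
  obtain ⟨d, hd⟩ := (collinear_iff_of_mem hp₀).1 hcol
  -- the affine parametrization
  set f : ℝ →ᵃ[ℝ] (Fin 3 → ℝ) := AffineMap.lineMap p₀ (p₀ + d) with hf
  have hfe : ∀ t : ℝ, f t = t • d + p₀ := by
    intro t; simp [hf, AffineMap.lineMap_apply, add_sub_cancel_left]
  set T : Set ℝ := f ⁻¹' s with hT
  have hTconv : Convex ℝ T := hconv.affine_preimage f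
  have hTne : T.Nonempty := ⟨0, by show f 0 ∈ s; rw [hfe]; simpa using hp₀⟩
  have hTclosed : IsClosed T := (hcomp.isClosed.preimage f.continuous_of_finiteDimensional)
  have hd0 : d ≠ 0 := by
    intro h0
    have : s ⊆ {p₀} := by
      intro p hp
      obtain ⟨r, hr⟩ := hd p hp
      simp [h0, hr]
    have h1 : vectorSpan ℝ s ≤ vectorSpan ℝ ({p₀} : Set (Fin 3 → ℝ)) := vectorSpan_mono ℝ this
    rw [vectorSpan_singleton, le_bot_iff] at h1
    rw [h1] at hrank
    simp at hrank
  have hTbdd : Bornology.IsBounded T := by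
    obtain ⟨R, hR⟩ := hcomp.isBounded.subset_ball 0
    have : T ⊆ Metric.closedBall 0 ((R + ‖p₀‖) / ‖d‖) := by
      intro t ht
      have h1 : f t ∈ Metric.ball (0 : Fin 3 → ℝ) R := hR ht
      rw [Metric.mem_ball] at h1
      rw [Metric.mem_closedBall]
      have h2 : ‖t • d‖ = ‖f t - p₀‖ := by rw [hfe]; simp
      have h3 : ‖f t - p₀‖ ≤ ‖f t‖ + ‖p₀‖ := norm_sub_le _ _
      have h4 : ‖f t‖ < R := by simpa [dist_eq_norm] using h1
      have h5 : |t| * ‖d‖ ≤ R + ‖p₀‖ := by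
        have h6 : ‖t • d‖ = |t| * ‖d‖ := by rw [norm_smul, Real.norm_eq_abs]
        nlinarith [h2, h3, h4, h6]
      have hdpos : 0 < ‖d‖ := norm_pos_iff.2 hd0
      rw [Real.dist_eq, sub_zero, le_div_iff₀ hdpos]
      exact h5
    exact Bornology.IsBounded.subset (Metric.isBounded_closedBall) this
  set a := sInf T with ha
  set b := sSup T with hb
  have haT : a ∈ T := hTclosed.csInf_mem hTne hTbdd.bddBelow
  have hbT : b ∈ T := hTclosed.csSup_mem hTne hTbdd.bddAbove
  have hIcc : T = Set.Icc a b := by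
    apply Subset.antisymm
    · intro t ht; exact ⟨csInf_le hTbdd.bddBelow ht, le_csSup hTbdd.bddAbove ht⟩
    · exact hTconv.ordConnected.out haT hbT
  have hseq : s = f '' Set.Icc a b := by
    apply Subset.antisymm
    · intro p hp
      obtain ⟨r, hr⟩ := hd p hp
      have hrT : r ∈ T := by
        rw [hT, Set.mem_preimage, hfe]
        simpa [hr] using hp
      exact ⟨r, hIcc ▸ hrT, by rw [hfe]; simpa using hr.symm⟩
    · rintro p ⟨t, htab, rfl⟩
      exact (hIcc ▸ htab : t ∈ T)
  have hab : a ≠ b := by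
    intro h
    have : s = {f a} := by
      rw [hseq, h]; simp
    rw [this, vectorSpan_singleton] at hrank
    simp at hrank
  refine ⟨f a, f b, ?_, ?_⟩
  · intro h
    rw [hfe, hfe] at h
    exact hab (by
      have := sub_eq_zero.2 h
      rw [show a • d + p₀ - (b • d + p₀) = (a - b) • d by module] at this
      rcases smul_eq_zero.1 this with h0 | h0
      · linarith [sub_eq_zero.1 h0]
      · exact absurd h0 hd0)
  · have hle : a ≤ b := csInf_le_csSup hTne hTbdd.bddBelow hTbdd.bddAbove
    rw [hseq, ← segment_eq_Icc hle]
    exact image_segment ℝ f a b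


lemma lattice_seg (v w : Fin 3 → ℤ) (u : Fin 3 → ℤ)
    (hu : ∑ i, u i * (w i - v i) = 1) (p : Fin 3 → ℤ)
    (hp : (fun i => (p i : ℝ)) ∈ segment ℝ (fun i => (v i : ℝ)) (fun i => (w i : ℝ))) :
    p = v ∨ p = w := by
  rw [segment_eq_image'] at hp
  obtain ⟨t, ht, htp⟩ := hp
  have hcoord : ∀ i, (p i : ℝ) = (v i : ℝ) + t * ((w i : ℝ) - (v i : ℝ)) := by
    intro i
    have h := congrFun htp i
    simp only [Pi.add_apply, Pi.smul_apply, Pi.sub_apply, smul_eq_mul] at h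
    linarith [h]
  set N : ℤ := ∑ i, u i * (p i - v i) with hN
  have htr : t = (N : ℝ) := by
    calc t = t * ((∑ i, u i * (w i - v i) : ℤ) : ℝ) := by rw [hu]; push_cast; ring
    _ = ∑ i, (u i : ℝ) * ((p i : ℝ) - (v i : ℝ)) := by
        push_cast [Finset.mul_sum]
        exact Finset.sum_congr rfl (fun i _ => by rw [hcoord i]; ring)
    _ = (N : ℝ) := by rw [hN]; push_cast; rfl
  have hN01 : N = 0 ∨ N = 1 := by
    have h0' : (0:ℤ) ≤ N := by exact_mod_cast htr ▸ ht.1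
    have h1' : N ≤ 1 := by exact_mod_cast htr ▸ ht.2
    omega
  rcases hN01 with h | h
  · left
    funext i
    have : (p i : ℝ) = (v i : ℝ) := by rw [hcoord i, htr, h]; push_cast; ring
    exact_mod_cast this
  · right
    funext i
    have : (p i : ℝ) = (w i : ℝ) := by rw [hcoord i, htr, h]; push_cast; ring
    exact_mod_cast this


lemma dotLinear (y : Fin 3 → ℝ) : IsLinearMap ℝ (fun x : Fin 3 → ℝ => ∑ i, y i * x i) := by
  constructor
  · intro a b; simp [Fin.sum_univ_three]; ring
  · intro c a; simp [Fin.sum_univ_three]; ring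

lemma dualCD (Δ dual : Set (Fin 3 → ℝ))
    (hΔ : Δ = convexHull ℝ ({![-1,0,1], ![-1,0,0], ![0,1,-1], ![2,3,-1], ![2,2,-1], ![1,-1,-1], ![0,-1,-1]} : Set (Fin 3 → ℝ)))
    (hdual : dual = {y | ∀ x ∈ Δ, -1 ≤ ∑ i, y i * x i}) :
    {y ∈ dual | ∀ x ∈ segment ℝ ![0,1,-1] ![2,3,-1], ∑ i, y i * x i = -1}
      = segment ℝ ![0,0,1] ![1,-1,0] := by
  ext y
  constructor
  · rintro ⟨hy, he⟩
    rw [hdual] at hy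
    have hA := hy ![-1,0,1] (by rw [hΔ]; exact subset_convexHull ℝ _ (by simp))
    have hB := hy ![-1,0,0] (by rw [hΔ]; exact subset_convexHull ℝ _ (by simp))
    have hE := hy ![2,2,-1] (by rw [hΔ]; exact subset_convexHull ℝ _ (by simp))
    have hF := hy ![1,-1,-1] (by rw [hΔ]; exact subset_convexHull ℝ _ (by simp))
    have hG := hy ![0,-1,-1] (by rw [hΔ]; exact subset_convexHull ℝ _ (by simp))
    have hC := he ![0,1,-1] (left_mem_segment ℝ _ _)
    have hD := he ![2,3,-1] (right_mem_segment ℝ _ _)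
    simp only [Fin.sum_univ_three, Matrix.cons_val_zero, Matrix.cons_val_one, Matrix.head_cons,
      Matrix.cons_val_two, Matrix.tail_cons] at hA hB hE hF hG hC hD
    refine ⟨1 - y 0, y 0, by linarith, by linarith, by ring, ?_⟩
    funext i
    fin_cases i <;> simp <;> linarith
  · rintro ⟨a, b, ha, hb, hab, rfl⟩
    constructor
    · rw [hdual]
      intro x hx
      rw [hΔ] at hx
      refine convexHull_min ?_ (convex_halfSpace_ge (dotLinear _) (-1)) hx
      intro z hz
      simp only [Set.mem_insert_iff, Set.mem_singleton_iff] at hz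
      rcases hz with rfl|rfl|rfl|rfl|rfl|rfl|rfl <;>
        · simp only [Set.mem_setOf_eq, Fin.sum_univ_three, Pi.add_apply, Pi.smul_apply,
            smul_eq_mul, Matrix.cons_val_zero, Matrix.cons_val_one, Matrix.head_cons,
            Matrix.cons_val_two, Matrix.tail_cons]
          linarith
    · rintro x ⟨c, d, hc, hd, hcd, rfl⟩
      simp only [Fin.sum_univ_three, Pi.add_apply, Pi.smul_apply, smul_eq_mul,
        Matrix.cons_val_zero, Matrix.cons_val_one, Matrix.head_cons,
        Matrix.cons_val_two, Matrix.tail_cons]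
      linear_combination (-(c+d)) * hab - hcd


lemma lattice_extreme' (v w : Fin 3 → ℝ) (vz wz u : Fin 3 → ℤ)
    (hv : v = fun i => (vz i : ℝ)) (hw : w = fun i => (wz i : ℝ))
    (hu : ∑ i, u i * (wz i - vz i) = 1) :
    ∀ p : Fin 3 → ℤ, (fun i => (p i : ℝ)) ∈ segment ℝ v w →
      (fun i => (p i : ℝ)) ∈ Set.extremePoints ℝ (segment ℝ v w) := by
  subst hv hw
  intro p hp
  rcases lattice_seg vz wz u hu p hp with rfl | rfl
  · exact ext_end
  · rw [segment_symm]; exact ext_end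

lemma dualCG (Δ dual : Set (Fin 3 → ℝ))
    (hΔ : Δ = convexHull ℝ ({![-1,0,1], ![-1,0,0], ![0,1,-1], ![2,3,-1], ![2,2,-1], ![1,-1,-1], ![0,-1,-1]} : Set (Fin 3 → ℝ)))
    (hdual : dual = {y | ∀ x ∈ Δ, -1 ≤ ∑ i, y i * x i}) :
    {y ∈ dual | ∀ x ∈ segment ℝ ![0,1,-1] ![0,-1,-1], ∑ i, y i * x i = -1}
      = segment ℝ ![0,0,1] ![1,0,1] := by
  ext y
  constructor
  · rintro ⟨hy, he⟩
    rw [hdual] at hy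
    have hA := hy ![-1,0,1] (by rw [hΔ]; exact subset_convexHull ℝ _ (by simp))
    have hB := hy ![-1,0,0] (by rw [hΔ]; exact subset_convexHull ℝ _ (by simp))
    have hD := hy ![2,3,-1] (by rw [hΔ]; exact subset_convexHull ℝ _ (by simp))
    have hE := hy ![2,2,-1] (by rw [hΔ]; exact subset_convexHull ℝ _ (by simp))
    have hF := hy ![1,-1,-1] (by rw [hΔ]; exact subset_convexHull ℝ _ (by simp))
    have hC := he ![0,1,-1] (left_mem_segment ℝ _ _)
    have hG := he ![0,-1,-1] (right_mem_segment ℝ _ _)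
    simp only [Fin.sum_univ_three, Matrix.cons_val_zero, Matrix.cons_val_one, Matrix.head_cons,
      Matrix.cons_val_two, Matrix.tail_cons] at hA hB hD hE hF hC hG
    refine ⟨1 - y 0, y 0, by linarith, by linarith, by ring, ?_⟩
    funext i
    fin_cases i <;> simp <;> linarith
  · rintro ⟨a, b, ha, hb, hab, rfl⟩
    constructor
    · rw [hdual]
      intro x hx
      rw [hΔ] at hx
      refine convexHull_min ?_ (convex_halfSpace_ge (dotLinear _) (-1)) hx
      intro z hz
      simp only [Set.mem_insert_iff, Set.mem_singleton_iff] at hz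
      rcases hz with rfl|rfl|rfl|rfl|rfl|rfl|rfl <;>
        · simp only [Set.mem_setOf_eq, Fin.sum_univ_three, Pi.add_apply, Pi.smul_apply,
            smul_eq_mul, Matrix.cons_val_zero, Matrix.cons_val_one, Matrix.head_cons,
            Matrix.cons_val_two, Matrix.tail_cons]
          linarith
    · rintro x ⟨c, d, hc, hd, hcd, rfl⟩
      simp only [Fin.sum_univ_three, Pi.add_apply, Pi.smul_apply, smul_eq_mul,
        Matrix.cons_val_zero, Matrix.cons_val_one, Matrix.head_cons,
        Matrix.cons_val_two, Matrix.tail_cons]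
      linear_combination (-(c+d)) * hab - hcd

lemma dualDG (Δ dual : Set (Fin 3 → ℝ))
    (hΔ : Δ = convexHull ℝ ({![-1,0,1], ![-1,0,0], ![0,1,-1], ![2,3,-1], ![2,2,-1], ![1,-1,-1], ![0,-1,-1]} : Set (Fin 3 → ℝ)))
    (hdual : dual = {y | ∀ x ∈ Δ, -1 ≤ ∑ i, y i * x i}) :
    {y ∈ dual | ∀ x ∈ segment ℝ ![2,3,-1] ![0,-1,-1], ∑ i, y i * x i = -1}
      = {![0,0,1]} := by
  ext y
  constructor
  · rintro ⟨hy, he⟩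
    rw [hdual] at hy
    have hA := hy ![-1,0,1] (by rw [hΔ]; exact subset_convexHull ℝ _ (by simp))
    have hB := hy ![-1,0,0] (by rw [hΔ]; exact subset_convexHull ℝ _ (by simp))
    have hC := hy ![0,1,-1] (by rw [hΔ]; exact subset_convexHull ℝ _ (by simp))
    have hE := hy ![2,2,-1] (by rw [hΔ]; exact subset_convexHull ℝ _ (by simp))
    have hF := hy ![1,-1,-1] (by rw [hΔ]; exact subset_convexHull ℝ _ (by simp))
    have hD := he ![2,3,-1] (left_mem_segment ℝ _ _)
    have hG := he ![0,-1,-1] (right_mem_segment ℝ _ _)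
    simp only [Fin.sum_univ_three, Matrix.cons_val_zero, Matrix.cons_val_one, Matrix.head_cons,
      Matrix.cons_val_two, Matrix.tail_cons] at hA hB hC hE hF hD hG
    have : y = ![0,0,1] := by
      funext i
      fin_cases i <;> simp <;> linarith
    simp [this]
  · rintro rfl
    constructor
    · rw [hdual]
      intro x hx
      rw [hΔ] at hx
      refine convexHull_min ?_ (convex_halfSpace_ge (dotLinear _) (-1)) hx
      intro z hz
      simp only [Set.mem_insert_iff, Set.mem_singleton_iff] at hz
      rcases hz with rfl|rfl|rfl|rfl|rfl|rfl|rfl <;>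
        · simp only [Set.mem_setOf_eq, Fin.sum_univ_three, Matrix.cons_val_zero,
            Matrix.cons_val_one, Matrix.head_cons, Matrix.cons_val_two, Matrix.tail_cons]
          norm_num
    · rintro x ⟨c, d, hc, hd, hcd, rfl⟩
      simp only [Fin.sum_univ_three, Pi.add_apply, Pi.smul_apply, smul_eq_mul,
        Matrix.cons_val_zero, Matrix.cons_val_one, Matrix.head_cons,
        Matrix.cons_val_two, Matrix.tail_cons]
      linarith

lemma dualCD' (Δ dual : Set (Fin 3 → ℝ))
    (hΔ : Δ = convexHull ℝ ({![-1,0,1], ![-1,0,0], ![0,1,-1], ![2,3,-1], ![2,2,-1], ![1,-1,-1], ![0,-1,-1]} : Set (Fin 3 → ℝ)))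
    (hdual : dual = {y | ∀ x ∈ Δ, -1 ≤ ∑ i, y i * x i}) :
    ∀ p : Fin 3 → ℤ,
      (fun i => (p i : ℝ)) ∈ {y ∈ dual | ∀ x ∈ segment ℝ ![0,1,-1] ![2,3,-1], ∑ i, y i * x i = -1} →
      (fun i => (p i : ℝ)) ∈ Set.extremePoints ℝ
        {y ∈ dual | ∀ x ∈ segment ℝ ![0,1,-1] ![2,3,-1], ∑ i, y i * x i = -1} := by
  rw [dualCD Δ dual hΔ hdual]
  exact lattice_extreme' _ _ ![0,0,1] ![1,-1,0] ![1,0,0]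
    (by funext i; fin_cases i <;> norm_num) (by funext i; fin_cases i <;> norm_num) (by decide)

lemma dualCG' (Δ dual : Set (Fin 3 → ℝ))
    (hΔ : Δ = convexHull ℝ ({![-1,0,1], ![-1,0,0], ![0,1,-1], ![2,3,-1], ![2,2,-1], ![1,-1,-1], ![0,-1,-1]} : Set (Fin 3 → ℝ)))
    (hdual : dual = {y | ∀ x ∈ Δ, -1 ≤ ∑ i, y i * x i}) :
    ∀ p : Fin 3 → ℤ,
      (fun i => (p i : ℝ)) ∈ {y ∈ dual | ∀ x ∈ segment ℝ ![0,1,-1] ![0,-1,-1], ∑ i, y i * x i = -1} →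
      (fun i => (p i : ℝ)) ∈ Set.extremePoints ℝ
        {y ∈ dual | ∀ x ∈ segment ℝ ![0,1,-1] ![0,-1,-1], ∑ i, y i * x i = -1} := by
  rw [dualCG Δ dual hΔ hdual]
  exact lattice_extreme' _ _ ![0,0,1] ![1,0,1] ![1,0,0]
    (by funext i; fin_cases i <;> norm_num) (by funext i; fin_cases i <;> norm_num) (by decide)

lemma dualDG' (Δ dual : Set (Fin 3 → ℝ))
    (hΔ : Δ = convexHull ℝ ({![-1,0,1], ![-1,0,0], ![0,1,-1], ![2,3,-1], ![2,2,-1], ![1,-1,-1], ![0,-1,-1]} : Set (Fin 3 → ℝ)))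
    (hdual : dual = {y | ∀ x ∈ Δ, -1 ≤ ∑ i, y i * x i}) :
    ∀ p : Fin 3 → ℤ,
      (fun i => (p i : ℝ)) ∈ {y ∈ dual | ∀ x ∈ segment ℝ ![2,3,-1] ![0,-1,-1], ∑ i, y i * x i = -1} →
      (fun i => (p i : ℝ)) ∈ Set.extremePoints ℝ
        {y ∈ dual | ∀ x ∈ segment ℝ ![2,3,-1] ![0,-1,-1], ∑ i, y i * x i = -1} := by
  rw [dualDG Δ dual hΔ hdual]
  intro p hp
  rw [extremePoints_singleton]
  exact hp


/-- For every edge Γ of the reflexive polytope Δ, either Γ has no interior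
lattice points or its dual edge Γ* has none: every lattice point on Γ
(resp. on Γ*) is an extreme point, i.e. an endpoint. -/
theorem stmt_4 :
    let Δ : Set (Fin 3 → ℝ) := convexHull ℝ ({![-1,0,1], ![-1,0,0], ![0,1,-1], ![2,3,-1], ![2,2,-1], ![1,-1,-1], ![0,-1,-1]} : Set (Fin 3 → ℝ))
    let dual : Set (Fin 3 → ℝ) := {y | ∀ x ∈ Δ, -1 ≤ ∑ i, y i * x i}
    ∀ Γ : Set (Fin 3 → ℝ), IsExposed ℝ Δ Γ →
      Module.finrank ℝ (vectorSpan ℝ Γ) = 1 →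
      (∀ p : Fin 3 → ℤ, (fun i => (p i : ℝ)) ∈ Γ →
          (fun i => (p i : ℝ)) ∈ Set.extremePoints ℝ Γ) ∨
      (∀ p : Fin 3 → ℤ,
          (fun i => (p i : ℝ)) ∈ {y ∈ dual | ∀ x ∈ Γ, ∑ i, y i * x i = -1} →
          (fun i => (p i : ℝ)) ∈
            Set.extremePoints ℝ {y ∈ dual | ∀ x ∈ Γ, ∑ i, y i * x i = -1}) := by
  intro Δ dual Γ hexp hrank
  have hΔ : Δ = convexHull ℝ ({![-1,0,1], ![-1,0,0], ![0,1,-1], ![2,3,-1], ![2,2,-1], ![1,-1,-1], ![0,-1,-1]} : Set (Fin 3 → ℝ)) := rfl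
  have hdual : dual = {y | ∀ x ∈ Δ, -1 ≤ ∑ i, y i * x i} := rfl
  have hfin : ({![-1,0,1], ![-1,0,0], ![0,1,-1], ![2,3,-1], ![2,2,-1], ![1,-1,-1], ![0,-1,-1]} : Set (Fin 3 → ℝ)).Finite :=
    ((((((Set.finite_singleton _).insert _).insert _).insert _).insert _).insert _).insert _
  have hcomp : IsCompact Δ := by rw [hΔ]; exact hfin.isCompact_convexHull ℝ
  have hΓcomp : IsCompact Γ := hcomp.of_isClosed_subset (hexp.isClosed hcomp.isClosed) hexp.subset
  have hΓconv : Convex ℝ Γ := hexp.convex (by rw [hΔ]; exact convex_convexHull ℝ _)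
  obtain ⟨v, w, hvw, hΓ⟩ := seg_struct hΓcomp hΓconv hrank
  have hvΓ : v ∈ Set.extremePoints ℝ Γ := by rw [hΓ]; exact ext_end
  have hwΓ : w ∈ Set.extremePoints ℝ Γ := by rw [hΓ, segment_symm]; exact ext_end
  have hsub : Set.extremePoints ℝ Δ ⊆ ({![-1,0,1], ![-1,0,0], ![0,1,-1], ![2,3,-1], ![2,2,-1], ![1,-1,-1], ![0,-1,-1]} : Set (Fin 3 → ℝ)) := by
    rw [hΔ]; exact extremePoints_convexHull_subset
  have hvV := hsub (hexp.isExtreme.extremePoints_subset_extremePoints hvΓ)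
  have hwV := hsub (hexp.isExtreme.extremePoints_subset_extremePoints hwΓ)
  simp only [Set.mem_insert_iff, Set.mem_singleton_iff] at hvV hwV
  rcases hvV with rfl | rfl | rfl | rfl | rfl | rfl | rfl <;>
    rcases hwV with rfl | rfl | rfl | rfl | rfl | rfl | rfl
  · exact absurd rfl hvw
  · refine Or.inl ?_
    rw [hΓ]
    exact lattice_extreme' _ _ ![-1,0,1] ![-1,0,0] ![-3,-3,-1] (by funext i; fin_cases i <;> norm_num) (by funext i; fin_cases i <;> norm_num) (by decide)
  · refine Or.inl ?_
    rw [hΓ]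
    exact lattice_extreme' _ _ ![-1,0,1] ![0,1,-1] ![-3,-2,-3] (by funext i; fin_cases i <;> norm_num) (by funext i; fin_cases i <;> norm_num) (by decide)
  · refine Or.inl ?_
    rw [hΓ]
    exact lattice_extreme' _ _ ![-1,0,1] ![2,3,-1] ![-3,2,-2] (by funext i; fin_cases i <;> norm_num) (by funext i; fin_cases i <;> norm_num) (by decide)
  · refine Or.inl ?_
    rw [hΓ]
    exact lattice_extreme' _ _ ![-1,0,1] ![2,2,-1] ![-3,2,-3] (by funext i; fin_cases i <;> norm_num) (by funext i; fin_cases i <;> norm_num) (by decide)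
  · refine Or.inl ?_
    rw [hΓ]
    exact lattice_extreme' _ _ ![-1,0,1] ![1,-1,-1] ![-3,-3,-2] (by funext i; fin_cases i <;> norm_num) (by funext i; fin_cases i <;> norm_num) (by decide)
  · refine Or.inl ?_
    rw [hΓ]
    exact lattice_extreme' _ _ ![-1,0,1] ![0,-1,-1] ![-3,-2,-1] (by funext i; fin_cases i <;> norm_num) (by funext i; fin_cases i <;> norm_num) (by decide)
  · refine Or.inl ?_
    rw [hΓ]
    exact lattice_extreme' _ _ ![-1,0,0] ![-1,0,1] ![-3,-3,1] (by funext i; fin_cases i <;> norm_num) (by funext i; fin_cases i <;> norm_num) (by decide)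
  · exact absurd rfl hvw
  · refine Or.inl ?_
    rw [hΓ]
    exact lattice_extreme' _ _ ![-1,0,0] ![0,1,-1] ![-3,1,-3] (by funext i; fin_cases i <;> norm_num) (by funext i; fin_cases i <;> norm_num) (by decide)
  · refine Or.inl ?_
    rw [hΓ]
    exact lattice_extreme' _ _ ![-1,0,0] ![2,3,-1] ![-3,3,-1] (by funext i; fin_cases i <;> norm_num) (by funext i; fin_cases i <;> norm_num) (by decide)
  · refine Or.inl ?_
    rw [hΓ]
    exact lattice_extreme' _ _ ![-1,0,0] ![2,2,-1] ![-2,2,-3] (by funext i; fin_cases i <;> norm_num) (by funext i; fin_cases i <;> norm_num) (by decide)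
  · refine Or.inl ?_
    rw [hΓ]
    exact lattice_extreme' _ _ ![-1,0,0] ![1,-1,-1] ![-2,-3,-2] (by funext i; fin_cases i <;> norm_num) (by funext i; fin_cases i <;> norm_num) (by decide)
  · refine Or.inl ?_
    rw [hΓ]
    exact lattice_extreme' _ _ ![-1,0,0] ![0,-1,-1] ![-3,-3,-1] (by funext i; fin_cases i <;> norm_num) (by funext i; fin_cases i <;> norm_num) (by decide)
  · refine Or.inl ?_
    rw [hΓ]
    exact lattice_extreme' _ _ ![0,1,-1] ![-1,0,1] ![-3,-2,-2] (by funext i; fin_cases i <;> norm_num) (by funext i; fin_cases i <;> norm_num) (by decide)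
  · refine Or.inl ?_
    rw [hΓ]
    exact lattice_extreme' _ _ ![0,1,-1] ![-1,0,0] ![-3,-1,-3] (by funext i; fin_cases i <;> norm_num) (by funext i; fin_cases i <;> norm_num) (by decide)
  · exact absurd rfl hvw
  · refine Or.inr ?_
    rw [hΓ]
    exact dualCD' Δ dual hΔ hdual
  · refine Or.inl ?_
    rw [hΓ]
    exact lattice_extreme' _ _ ![0,1,-1] ![2,2,-1] ![-1,3,-3] (by funext i; fin_cases i <;> norm_num) (by funext i; fin_cases i <;> norm_num) (by decide)
  · refine Or.inl ?_
    rw [hΓ]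
    exact lattice_extreme' _ _ ![0,1,-1] ![1,-1,-1] ![-3,-2,-3] (by funext i; fin_cases i <;> norm_num) (by funext i; fin_cases i <;> norm_num) (by decide)
  · refine Or.inr ?_
    rw [hΓ]
    exact dualCG' Δ dual hΔ hdual
  · refine Or.inl ?_
    rw [hΓ]
    exact lattice_extreme' _ _ ![2,3,-1] ![-1,0,1] ![-3,2,-1] (by funext i; fin_cases i <;> norm_num) (by funext i; fin_cases i <;> norm_num) (by decide)
  · refine Or.inl ?_
    rw [hΓ]
    exact lattice_extreme' _ _ ![2,3,-1] ![-1,0,0] ![-3,2,-2] (by funext i; fin_cases i <;> norm_num) (by funext i; fin_cases i <;> norm_num) (by decide)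
  · refine Or.inr ?_
    rw [hΓ, segment_symm]
    exact dualCD' Δ dual hΔ hdual
  · exact absurd rfl hvw
  · refine Or.inl ?_
    rw [hΓ]
    exact lattice_extreme' _ _ ![2,3,-1] ![2,2,-1] ![-3,-1,-3] (by funext i; fin_cases i <;> norm_num) (by funext i; fin_cases i <;> norm_num) (by decide)
  · refine Or.inl ?_
    rw [hΓ]
    exact lattice_extreme' _ _ ![2,3,-1] ![1,-1,-1] ![-1,0,-3] (by funext i; fin_cases i <;> norm_num) (by funext i; fin_cases i <;> norm_num) (by decide)
  · refine Or.inr ?_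
    rw [hΓ]
    exact dualDG' Δ dual hΔ hdual
  · refine Or.inl ?_
    rw [hΓ]
    exact lattice_extreme' _ _ ![2,2,-1] ![-1,0,1] ![-3,1,-3] (by funext i; fin_cases i <;> norm_num) (by funext i; fin_cases i <;> norm_num) (by decide)
  · refine Or.inl ?_
    rw [hΓ]
    exact lattice_extreme' _ _ ![2,2,-1] ![-1,0,0] ![-3,3,-2] (by funext i; fin_cases i <;> norm_num) (by funext i; fin_cases i <;> norm_num) (by decide)
  · refine Or.inl ?_
    rw [hΓ]
    exact lattice_extreme' _ _ ![2,2,-1] ![0,1,-1] ![-2,3,-3] (by funext i; fin_cases i <;> norm_num) (by funext i; fin_cases i <;> norm_num) (by decide)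
  · refine Or.inl ?_
    rw [hΓ]
    exact lattice_extreme' _ _ ![2,2,-1] ![2,3,-1] ![-3,1,-3] (by funext i; fin_cases i <;> norm_num) (by funext i; fin_cases i <;> norm_num) (by decide)
  · exact absurd rfl hvw
  · refine Or.inl ?_
    rw [hΓ]
    exact lattice_extreme' _ _ ![2,2,-1] ![1,-1,-1] ![-1,0,-3] (by funext i; fin_cases i <;> norm_num) (by funext i; fin_cases i <;> norm_num) (by decide)
  · refine Or.inl ?_
    rw [hΓ]
    exact lattice_extreme' _ _ ![2,2,-1] ![0,-1,-1] ![-2,1,-3] (by funext i; fin_cases i <;> norm_num) (by funext i; fin_cases i <;> norm_num) (by decide)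
  · refine Or.inl ?_
    rw [hΓ]
    exact lattice_extreme' _ _ ![1,-1,-1] ![-1,0,1] ![-3,-3,-1] (by funext i; fin_cases i <;> norm_num) (by funext i; fin_cases i <;> norm_num) (by decide)
  · refine Or.inl ?_
    rw [hΓ]
    exact lattice_extreme' _ _ ![1,-1,-1] ![-1,0,0] ![-3,-3,-2] (by funext i; fin_cases i <;> norm_num) (by funext i; fin_cases i <;> norm_num) (by decide)
  · refine Or.inl ?_
    rw [hΓ]
    exact lattice_extreme' _ _ ![1,-1,-1] ![0,1,-1] ![-3,-1,-3] (by funext i; fin_cases i <;> norm_num) (by funext i; fin_cases i <;> norm_num) (by decide)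
  · refine Or.inl ?_
    rw [hΓ]
    exact lattice_extreme' _ _ ![1,-1,-1] ![2,3,-1] ![-3,1,-3] (by funext i; fin_cases i <;> norm_num) (by funext i; fin_cases i <;> norm_num) (by decide)
  · refine Or.inl ?_
    rw [hΓ]
    exact lattice_extreme' _ _ ![1,-1,-1] ![2,2,-1] ![-2,1,-3] (by funext i; fin_cases i <;> norm_num) (by funext i; fin_cases i <;> norm_num) (by decide)
  · exact absurd rfl hvw
  · refine Or.inl ?_
    rw [hΓ]
    exact lattice_extreme' _ _ ![1,-1,-1] ![0,-1,-1] ![-1,-3,-3] (by funext i; fin_cases i <;> norm_num) (by funext i; fin_cases i <;> norm_num) (by decide)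
  · refine Or.inl ?_
    rw [hΓ]
    exact lattice_extreme' _ _ ![0,-1,-1] ![-1,0,1] ![-3,-2,0] (by funext i; fin_cases i <;> norm_num) (by funext i; fin_cases i <;> norm_num) (by decide)
  · refine Or.inl ?_
    rw [hΓ]
    exact lattice_extreme' _ _ ![0,-1,-1] ![-1,0,0] ![-3,-3,1] (by funext i; fin_cases i <;> norm_num) (by funext i; fin_cases i <;> norm_num) (by decide)
  · refine Or.inr ?_
    rw [hΓ, segment_symm]
    exact dualCG' Δ dual hΔ hdual
  · refine Or.inr ?_
    rw [hΓ, segment_symm]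
    exact dualDG' Δ dual hΔ hdual
  · refine Or.inl ?_
    rw [hΓ]
    exact lattice_extreme' _ _ ![0,-1,-1] ![2,2,-1] ![-1,1,-3] (by funext i; fin_cases i <;> norm_num) (by funext i; fin_cases i <;> norm_num) (by decide)
  · refine Or.inl ?_
    rw [hΓ]
    exact lattice_extreme' _ _ ![0,-1,-1] ![1,-1,-1] ![1,-3,-3] (by funext i; fin_cases i <;> norm_num) (by funext i; fin_cases i <;> norm_num) (by decide)
  · exact absurd rfl hvw
end

section
/- Let Δ' ⊂ ℝ³ be the convex hull of the eight points (1,0,−1), (0,−1,−1), (−1,−1,−1), (−1,2,−1), (1,2,−1), (1,0,1), (0,−1,2), (−1,−1,2). Then Δ' contains the origin in its interior and its polar dual (Δ')* equals the convex hull of the six integer points (0,0,1), (−1,0,0), (−1,1,0), (0,1,0), (1,0,0), (0,−1,−1); in particular Δ' is a reflexive polytope. -/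
private lemma hs1 (c : Fin 3 → ℝ) : Convex ℝ {z : Fin 3 → ℝ | -1 ≤ ∑ i, c i * z i} := by
  have h : IsLinearMap ℝ fun z : Fin 3 → ℝ => ∑ i, c i * z i := by
    constructor
    · intro a b; simp [mul_add, Finset.sum_add_distrib]
    · intro a b; simp [Finset.mul_sum, smul_eq_mul, mul_left_comm]
  exact convex_halfSpace_ge h (-1)

private lemma hs2 (c : Fin 3 → ℝ) : Convex ℝ {z : Fin 3 → ℝ | -1 ≤ ∑ i, z i * c i} := by
  have h : IsLinearMap ℝ fun z : Fin 3 → ℝ => ∑ i, z i * c i := by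
    constructor
    · intro a b; simp [add_mul, Finset.sum_add_distrib]
    · intro a b; simp [Finset.mul_sum, smul_eq_mul, mul_assoc]
  exact convex_halfSpace_ge h (-1)

private lemma combo4 {s : Set (Fin 3 → ℝ)} (hs : Convex ℝ s) {p1 p2 p3 p4 : Fin 3 → ℝ}
    (h1 : p1 ∈ s) (h2 : p2 ∈ s) (h3 : p3 ∈ s) (h4 : p4 ∈ s) {a b c d : ℝ}
    (ha : 0 ≤ a) (hb : 0 ≤ b) (hc : 0 ≤ c) (hd : 0 ≤ d) (hsum : a + b + c + d = 1) :
    a • p1 + b • p2 + c • p3 + d • p4 ∈ s := by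
  have := hs.sum_mem (t := (Finset.univ : Finset (Fin 4))) (w := ![a,b,c,d])
    (z := ![p1,p2,p3,p4])
    (fun i _ => by fin_cases i <;> assumption)
    (by rw [Fin.sum_univ_four]; exact hsum)
    (fun i _ => by fin_cases i <;> assumption)
  rw [Fin.sum_univ_four] at this
  exact this

private lemma combo8 {s : Set (Fin 3 → ℝ)} (hs : Convex ℝ s)
    {p1 p2 p3 p4 p5 p6 p7 p8 : Fin 3 → ℝ}
    (h1 : p1 ∈ s) (h2 : p2 ∈ s) (h3 : p3 ∈ s) (h4 : p4 ∈ s)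
    (h5 : p5 ∈ s) (h6 : p6 ∈ s) (h7 : p7 ∈ s) (h8 : p8 ∈ s)
    {a b c d e f g h : ℝ}
    (ha : 0 ≤ a) (hb : 0 ≤ b) (hc : 0 ≤ c) (hd : 0 ≤ d)
    (he : 0 ≤ e) (hf : 0 ≤ f) (hg : 0 ≤ g) (hh : 0 ≤ h)
    (hsum : a + b + c + d + e + f + g + h = 1) :
    a • p1 + b • p2 + c • p3 + d • p4 + e • p5 + f • p6 + g • p7 + h • p8 ∈ s := by
  have := hs.sum_mem (t := (Finset.univ : Finset (Fin 8))) (w := ![a,b,c,d,e,f,g,h])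
    (z := ![p1,p2,p3,p4,p5,p6,p7,p8])
    (fun i _ => by fin_cases i <;> assumption)
    (by rw [Fin.sum_univ_eight]; exact hsum)
    (fun i _ => by fin_cases i <;> assumption)
  rw [Fin.sum_univ_eight] at this
  exact this

private lemma polar_mem (v : Fin 3 → ℝ)
    (hv : v ∈ ({![1,0,-1], ![0,-1,-1], ![-1,-1,-1], ![-1,2,-1], ![1,2,-1], ![1,0,1], ![0,-1,2], ![-1,-1,2]} : Set (Fin 3 → ℝ)))
    (y : Fin 3 → ℝ)
    (hy : y ∈ convexHull ℝ ({![0,0,1], ![-1,0,0], ![-1,1,0], ![0,1,0], ![1,0,0], ![0,-1,-1]} : Set (Fin 3 → ℝ))) :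
    -1 ≤ ∑ i, y i * v i := by
  refine convexHull_min (fun u hu => ?_) (hs2 v) hy
  simp only [Set.mem_insert_iff, Set.mem_singleton_iff] at hu hv
  rcases hu with rfl|rfl|rfl|rfl|rfl|rfl <;> rcases hv with rfl|rfl|rfl|rfl|rfl|rfl|rfl|rfl <;>
    norm_num [Fin.sum_univ_three, Matrix.cons_val_two, Matrix.tail_cons, Matrix.head_cons]

/-- The polytope Δ' contains the origin in its interior and its polar dual
is the convex hull of the listed integer points; in particular Δ' is reflexive. -/
theorem stmt_5 :
    let Δ' : Set (Fin 3 → ℝ) := convexHull ℝ ({![1,0,-1], ![0,-1,-1], ![-1,-1,-1], ![-1,2,-1], ![1,2,-1], ![1,0,1], ![0,-1,2], ![-1,-1,2]} : Set (Fin 3 → ℝ))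
    (0 : Fin 3 → ℝ) ∈ interior Δ' ∧
    {y : Fin 3 → ℝ | ∀ x ∈ Δ', -1 ≤ ∑ i, y i * x i} =
      convexHull ℝ ({![0,0,1], ![-1,0,0], ![-1,1,0], ![0,1,0], ![1,0,0], ![0,-1,-1]} : Set (Fin 3 → ℝ)) := by
  intro Δ'
  have hΔ : Δ' = convexHull ℝ ({![1,0,-1], ![0,-1,-1], ![-1,-1,-1], ![-1,2,-1], ![1,2,-1], ![1,0,1], ![0,-1,2], ![-1,-1,2]} : Set (Fin 3 → ℝ)) := rfl
  have hsub := subset_convexHull ℝ ({![1,0,-1], ![0,-1,-1], ![-1,-1,-1], ![-1,2,-1], ![1,2,-1], ![1,0,1], ![0,-1,2], ![-1,-1,2]} : Set (Fin 3 → ℝ))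
  have hv1 : (![1,0,-1] : Fin 3 → ℝ) ∈ Δ' := hsub (by left; rfl)
  have hv2 : (![0,-1,-1] : Fin 3 → ℝ) ∈ Δ' := hsub (by right; left; rfl)
  have hv3 : (![-1,-1,-1] : Fin 3 → ℝ) ∈ Δ' := hsub (by right; right; left; rfl)
  have hv4 : (![-1,2,-1] : Fin 3 → ℝ) ∈ Δ' := hsub (by right; right; right; left; rfl)
  have hv5 : (![1,2,-1] : Fin 3 → ℝ) ∈ Δ' := hsub (by right; right; right; right; left; rfl)
  have hv6 : (![1,0,1] : Fin 3 → ℝ) ∈ Δ' := hsub (by right; right; right; right; right; left; rfl)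
  have hv7 : (![0,-1,2] : Fin 3 → ℝ) ∈ Δ' := hsub (by right; right; right; right; right; right; left; rfl)
  have hv8 : (![-1,-1,2] : Fin 3 → ℝ) ∈ Δ' := hsub (by right; right; right; right; right; right; right; rfl)
  have hWsub := subset_convexHull ℝ ({![0,0,1], ![-1,0,0], ![-1,1,0], ![0,1,0], ![1,0,0], ![0,-1,-1]} : Set (Fin 3 → ℝ))
  have hw1 : (![0,0,1] : Fin 3 → ℝ) ∈ convexHull ℝ ({![0,0,1], ![-1,0,0], ![-1,1,0], ![0,1,0], ![1,0,0], ![0,-1,-1]} : Set (Fin 3 → ℝ)) := hWsub (by left; rfl)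
  have hw2 : (![-1,0,0] : Fin 3 → ℝ) ∈ convexHull ℝ ({![0,0,1], ![-1,0,0], ![-1,1,0], ![0,1,0], ![1,0,0], ![0,-1,-1]} : Set (Fin 3 → ℝ)) := hWsub (by right; left; rfl)
  have hw3 : (![-1,1,0] : Fin 3 → ℝ) ∈ convexHull ℝ ({![0,0,1], ![-1,0,0], ![-1,1,0], ![0,1,0], ![1,0,0], ![0,-1,-1]} : Set (Fin 3 → ℝ)) := hWsub (by right; right; left; rfl)
  have hw4 : (![0,1,0] : Fin 3 → ℝ) ∈ convexHull ℝ ({![0,0,1], ![-1,0,0], ![-1,1,0], ![0,1,0], ![1,0,0], ![0,-1,-1]} : Set (Fin 3 → ℝ)) := hWsub (by right; right; right; left; rfl)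
  have hw5 : (![1,0,0] : Fin 3 → ℝ) ∈ convexHull ℝ ({![0,0,1], ![-1,0,0], ![-1,1,0], ![0,1,0], ![1,0,0], ![0,-1,-1]} : Set (Fin 3 → ℝ)) := hWsub (by right; right; right; right; left; rfl)
  have hw6 : (![0,-1,-1] : Fin 3 → ℝ) ∈ convexHull ℝ ({![0,0,1], ![-1,0,0], ![-1,1,0], ![0,1,0], ![1,0,0], ![0,-1,-1]} : Set (Fin 3 → ℝ)) := hWsub (by right; right; right; right; right; rfl)
  constructor
  · -- interior
    rw [mem_interior]
    refine ⟨Metric.ball 0 (1/8), ?_, Metric.isOpen_ball, Metric.mem_ball_self (by norm_num)⟩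
    intro x hx
    have hx' : ∀ i, |x i| < 1/8 := by
      intro i
      have := (dist_pi_lt_iff (by norm_num : (0:ℝ) < 1/8)).mp (Metric.mem_ball.mp hx) i
      simpa [Real.dist_eq] using this
    have h0 := abs_lt.mp (hx' 0); have h1 := abs_lt.mp (hx' 1); have h2 := abs_lt.mp (hx' 2)
    have hxeq : x = (1/8 : ℝ) • ![1,0,-1] + (1/8 - x 2/3 : ℝ) • ![0,-1,-1]
        + (1/8 - x 1/3 : ℝ) • ![-1,-1,-1] + (1/8 - x 0/2 + x 1/3 : ℝ) • ![-1,2,-1]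
        + (1/8 + x 0/2 : ℝ) • ![1,2,-1] + (1/8 : ℝ) • ![1,0,1]
        + (1/8 + x 2/3 : ℝ) • ![0,-1,2] + (1/8 : ℝ) • ![-1,-1,2] := by
      funext j
      fin_cases j <;> simp <;> ring
    rw [hxeq]
    exact combo8 (convex_convexHull ℝ _) hv1 hv2 hv3 hv4 hv5 hv6 hv7 hv8
      (by norm_num) (by linarith) (by linarith) (by linarith) (by linarith)
      (by norm_num) (by linarith) (by norm_num) (by ring)
  · -- polar dual equality
    ext y
    simp only [Set.mem_setOf_eq]
    constructor
    · intro hy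
      have g1 := hy _ hv1; have g2 := hy _ hv2; have g3 := hy _ hv3; have g4 := hy _ hv4
      have g5 := hy _ hv5; have g6 := hy _ hv6; have g7 := hy _ hv7; have g8 := hy _ hv8
      simp only [Fin.sum_univ_three, Matrix.cons_val_zero, Matrix.cons_val_one, Matrix.head_cons,
        Matrix.cons_val_two, Matrix.tail_cons] at g1 g2 g3 g4 g5 g6 g7 g8
      rcases le_total 0 (y 0) with hc | hc
      · -- simplex w1 w4 w5 w6
        have hyeq : y = ((1 - y 0 - y 1 + 2*y 2)/3 : ℝ) • ![0,0,1]
            + ((1 - y 0 + 2*y 1 - y 2)/3 : ℝ) • ![0,1,0] + (y 0 : ℝ) • ![1,0,0]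
            + ((1 - y 0 - y 1 - y 2)/3 : ℝ) • ![0,-1,-1] := by
          funext j; fin_cases j <;> simp <;> ring
        rw [hyeq]
        exact combo4 (convex_convexHull ℝ _) hw1 hw4 hw5 hw6
          (by linarith) (by linarith) hc (by linarith) (by ring)
      · rcases le_total 0 (3*y 0 + 2*y 1 - y 2 + 1) with hd | hd
        · -- simplex w1 w3 w4 w6
          have hyeq : y = ((1 - y 1 + 2*y 2)/3 : ℝ) • ![0,0,1] + (-(y 0) : ℝ) • ![-1,1,0]
              + ((1 + 3*y 0 + 2*y 1 - y 2)/3 : ℝ) • ![0,1,0]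
              + ((1 - y 1 - y 2)/3 : ℝ) • ![0,-1,-1] := by
            funext j; fin_cases j <;> simp <;> ring
          rw [hyeq]
          exact combo4 (convex_convexHull ℝ _) hw1 hw3 hw4 hw6
            (by linarith) (by linarith) (by linarith) (by linarith) (by ring)
        · -- simplex w1 w2 w3 w6
          have hyeq : y = ((1 + y 0 + y 2)/2 : ℝ) • ![0,0,1]
              + ((-1 - 3*y 0 - 2*y 1 + y 2)/2 : ℝ) • ![-1,0,0]
              + ((1 + y 0 + 2*y 1 - y 2)/2 : ℝ) • ![-1,1,0]
              + ((1 + y 0 - y 2)/2 : ℝ) • ![0,-1,-1] := by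
            funext j; fin_cases j <;> simp <;> ring
          rw [hyeq]
          exact combo4 (convex_convexHull ℝ _) hw1 hw2 hw3 hw6
            (by linarith) (by linarith) (by linarith) (by linarith) (by ring)
    · intro hy x hx
      refine convexHull_min (fun v hv => ?_) (hs1 y) hx
      exact polar_mem v hv y hy
end

section
/- Let Δ ⊂ ℝ³ be the convex hull of the six points (−1,0,2), (0,1,0), (1,2,−1), (1,1,−1), (0,−1,0), (0,−1,−1), and let Δ' ⊂ ℝ³ be the convex hull of (1,0,−1), (0,−1,−1), (−1,−1,−1), (−1,2,−1), (1,2,−1), (1,0,1), (0,−1,2), (−1,−1,2). Let M be the integer matrix with rows (2,2,1), (−1,0,0), (1,1,1). Then det M = 1 (so M ∈ GL₃(ℤ)), and the linear map ℝ³ → ℝ³ sending a row vector v to v·M maps Δ bijectively onto the polar dual (Δ')* of Δ'. Consequently Δ is reflexive and its polar dual Δ* is isomorphic to Δ' under a lattice isometry of ℤ³. -/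
namespace Stmt6

abbrev E3 := Fin 3 → ℝ

def VD : Set E3 := {![-1,0,2], ![0,1,0], ![1,2,-1], ![1,1,-1], ![0,-1,0], ![0,-1,-1]}
def VD' : Set E3 := {![1,0,-1], ![0,-1,-1], ![-1,-1,-1], ![-1,2,-1], ![1,2,-1], ![1,0,1], ![0,-1,2], ![-1,-1,2]}
def T : Set E3 := {![0,0,1], ![-1,0,0], ![-1,1,0], ![0,1,0], ![1,0,0], ![0,-1,-1]}
def U : Set E3 := {![1,-1,0], ![-3,0,-2], ![-5,1,-3], ![1,1,0], ![5,-1,2], ![3,-1,2], ![0,0,1], ![-2,1,0]}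

def dl (P : Set E3) : Set E3 := {y | ∀ x ∈ P, -1 ≤ ∑ i, y i * x i}

def fM (v : E3) : E3 := ![2*v 0 - v 1 + v 2, 2*v 0 + v 2, v 0 + v 2]
def fN (y : E3) : E3 := ![-(y 1), y 0 + y 1 - y 2, -(y 0) + 2*y 2]
def fMt (y : E3) : E3 := ![2*y 0 + 2*y 1 + y 2, -(y 0), y 0 + y 1 + y 2]

lemma hMr : (fun v : E3 => Matrix.vecMul v ((!![2,2,1; -1,0,0; 1,1,1] : Matrix (Fin 3) (Fin 3) ℤ).map (Int.cast : ℤ → ℝ))) = fM := by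
  funext v j
  fin_cases j <;>
    simp [Matrix.vecMul, dotProduct, Fin.sum_univ_three, Matrix.map_apply, fM] <;> ring

lemma hNr : (fun v : E3 => Matrix.vecMul v ((!![0,1,-1; -1,1,0; 0,-1,2] : Matrix (Fin 3) (Fin 3) ℤ).map (Int.cast : ℤ → ℝ))) = fN := by
  funext v j
  fin_cases j <;>
    simp [Matrix.vecMul, dotProduct, Fin.sum_univ_three, Matrix.map_apply, fN] <;> ring

lemma detM : (!![2,2,1; -1,0,0; 1,1,1] : Matrix (Fin 3) (Fin 3) ℤ).det = 1 := by
  simp [Matrix.det_fin_three]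

lemma detN : (!![0,1,-1; -1,1,0; 0,-1,2] : Matrix (Fin 3) (Fin 3) ℤ).det = 1 := by
  simp [Matrix.det_fin_three]

lemma fMt_fN (y : E3) : fMt (fN y) = y := by
  funext j; fin_cases j <;> simp [fMt, fN] <;> ring

lemma fN_fMt (x : E3) : fN (fMt x) = x := by
  funext j; fin_cases j <;> simp [fMt, fN] <;> ring

lemma pairKey (y v : E3) : ∑ i, fN y i * fM v i = ∑ i, y i * v i := by
  simp [fN, fM, Fin.sum_univ_three]; ring

noncomputable def fML : E3 →ₗ[ℝ] E3 where
  toFun := fM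
  map_add' a b := by funext j; fin_cases j <;> simp [fM] <;> ring
  map_smul' c a := by funext j; fin_cases j <;> simp [fM] <;> ring

noncomputable def fMtL : E3 →ₗ[ℝ] E3 where
  toFun := fMt
  map_add' a b := by funext j; fin_cases j <;> simp [fMt] <;> ring
  map_smul' c a := by funext j; fin_cases j <;> simp [fMt] <;> ring

lemma fM_inj : Function.Injective fM := by
  intro v w h
  have h0 := congrFun h 0
  have h1 := congrFun h 1
  have h2 := congrFun h 2
  simp [fM] at h0 h1 h2
  funext j; fin_cases j <;> simp <;> linarith

lemma dl_convex (P : Set E3) : Convex ℝ (dl P) := by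
  intro x hx y hy a b ha hb hab
  intro s hs
  have h1 := hx s hs
  have h2 := hy s hs
  have e : ∑ i, (a • x + b • y) i * s i
      = a * (∑ i, x i * s i) + b * (∑ i, y i * s i) := by
    simp [Fin.sum_univ_three]; ring
  rw [e]
  nlinarith [mul_le_mul_of_nonneg_left h1 ha, mul_le_mul_of_nonneg_left h2 hb]

lemma halfspace_convex (y : E3) : Convex ℝ {x : E3 | -1 ≤ ∑ i, y i * x i} := by
  intro u hu v hv a b ha hb hab
  simp only [Set.mem_setOf_eq] at *
  have e : ∑ i, y i * (a • u + b • v) i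
      = a * (∑ i, y i * u i) + b * (∑ i, y i * v i) := by
    simp [Fin.sum_univ_three]; ring
  rw [e]
  nlinarith [mul_le_mul_of_nonneg_left hu ha, mul_le_mul_of_nonneg_left hv hb]

lemma mem_dl_hull (A : Set E3) (y : E3) :
    y ∈ dl (convexHull ℝ A) ↔ ∀ x ∈ A, -1 ≤ ∑ i, y i * x i := by
  constructor
  · exact fun h x hx => h x (subset_convexHull ℝ A hx)
  · intro h x hx
    exact convexHull_min h (halfspace_convex y) hx

lemma mem4 {s : Set E3} {p1 p2 p3 p4 : E3} (h1 : p1 ∈ s) (h2 : p2 ∈ s) (h3 : p3 ∈ s)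
    (h4 : p4 ∈ s) {c1 c2 c3 c4 : ℝ} (n1 : 0 ≤ c1) (n2 : 0 ≤ c2) (n3 : 0 ≤ c3) (n4 : 0 ≤ c4)
    (hsum : c1 + c2 + c3 + c4 = 1) :
    c1 • p1 + c2 • p2 + c3 • p3 + c4 • p4 ∈ convexHull ℝ s := by
  have := (convex_convexHull ℝ s).sum_mem (t := (Finset.univ : Finset (Fin 4)))
    (w := ![c1, c2, c3, c4]) (z := ![p1, p2, p3, p4])
    (by intro i _; fin_cases i <;> simpa)
    (by simpa [Fin.sum_univ_four] using hsum)
    (by intro i _; fin_cases i <;> simp <;>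
        [exact subset_convexHull ℝ s h1; exact subset_convexHull ℝ s h2;
         exact subset_convexHull ℝ s h3; exact subset_convexHull ℝ s h4])
  simpa [Fin.sum_univ_four] using this

lemma P_subset_hullT (y : E3) (h : ∀ x ∈ VD', -1 ≤ ∑ i, y i * x i) :
    y ∈ convexHull ℝ T := by
  have h1 := h ![1,0,-1] (by simp [VD'])
  have h2 := h ![0,-1,-1] (by simp [VD'])
  have h3 := h ![-1,-1,-1] (by simp [VD'])
  have h4 := h ![-1,2,-1] (by simp [VD'])
  have h5 := h ![1,2,-1] (by simp [VD'])
  have h6 := h ![1,0,1] (by simp [VD'])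
  have h7 := h ![0,-1,2] (by simp [VD'])
  have h8 := h ![-1,-1,2] (by simp [VD'])
  simp only [Fin.sum_univ_three, Matrix.cons_val_zero, Matrix.cons_val_one, Matrix.head_cons,
    Matrix.cons_val_two, Matrix.tail_cons] at h1 h2 h3 h4 h5 h6 h7 h8
  have ha : (![0,0,1] : E3) ∈ T := by simp [T]
  have hb : (![-1,0,0] : E3) ∈ T := by simp [T]
  have hc : (![-1,1,0] : E3) ∈ T := by simp [T]
  have hd : (![0,1,0] : E3) ∈ T := by simp [T]
  have he : (![1,0,0] : E3) ∈ T := by simp [T]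
  have hf : (![0,-1,-1] : E3) ∈ T := by simp [T]
  rcases le_total 1 (-3 * y 0 - 2 * y 1 + y 2) with hcut | hcut
  · have hy : y = ((y 0 + y 2 + 1)/2) • ![0,0,1] + ((-3*y 0 - 2*y 1 + y 2 - 1)/2) • ![-1,0,0]
        + ((y 0 + 2*y 1 - y 2 + 1)/2) • ![-1,1,0] + ((y 0 - y 2 + 1)/2) • ![0,-1,-1] := by
      funext j; fin_cases j <;> simp <;> ring
    rw [hy]
    exact mem4 ha hb hc hf (by linarith) (by linarith) (by linarith) (by linarith) (by ring)
  · rcases le_total (y 0) 0 with hx0 | hx0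
    · have hy : y = ((-y 1 + 2*y 2 + 1)/3) • ![0,0,1] + (-(y 0)) • ![-1,1,0]
          + (y 0 + (2*y 1 - y 2 + 1)/3) • ![0,1,0] + ((-y 1 - y 2 + 1)/3) • ![0,-1,-1] := by
        funext j; fin_cases j <;> simp <;> ring
      rw [hy]
      exact mem4 ha hc hd hf (by linarith) (by linarith) (by linarith) (by linarith) (by ring)
    · have hy : y = ((-y 0 - y 1 + 2*y 2 + 1)/3) • ![0,0,1] + ((-y 0 + 2*y 1 - y 2 + 1)/3) • ![0,1,0]
          + (y 0) • ![1,0,0] + ((-y 0 - y 1 - y 2 + 1)/3) • ![0,-1,-1] := by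
        funext j; fin_cases j <;> simp <;> ring
      rw [hy]
      exact mem4 ha hd he hf (by linarith) (by linarith) (by linarith) (by linarith) (by ring)

lemma image_VD : fM '' VD = T := by
  have e1 : fM ![-1,0,2] = ![0,0,1] := by funext j; fin_cases j <;> simp [fM] <;> norm_num
  have e2 : fM ![0,1,0] = ![-1,0,0] := by funext j; fin_cases j <;> simp [fM] <;> norm_num
  have e3 : fM ![1,2,-1] = ![-1,1,0] := by funext j; fin_cases j <;> simp [fM] <;> norm_num
  have e4 : fM ![1,1,-1] = ![0,1,0] := by funext j; fin_cases j <;> simp [fM] <;> norm_num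
  have e5 : fM ![0,-1,0] = ![1,0,0] := by funext j; fin_cases j <;> simp [fM] <;> norm_num
  have e6 : fM ![0,-1,-1] = ![0,-1,-1] := by funext j; fin_cases j <;> simp [fM] <;> norm_num
  simp only [VD, T, Set.image_insert_eq, Set.image_singleton, e1, e2, e3, e4, e5, e6]

lemma image_VD' : fMt '' VD' = U := by
  have e1 : fMt ![1,0,-1] = ![1,-1,0] := by funext j; fin_cases j <;> simp [fMt] <;> norm_num
  have e2 : fMt ![0,-1,-1] = ![-3,0,-2] := by funext j; fin_cases j <;> simp [fMt] <;> norm_num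
  have e3 : fMt ![-1,-1,-1] = ![-5,1,-3] := by funext j; fin_cases j <;> simp [fMt] <;> norm_num
  have e4 : fMt ![-1,2,-1] = ![1,1,0] := by funext j; fin_cases j <;> simp [fMt] <;> norm_num
  have e5 : fMt ![1,2,-1] = ![5,-1,2] := by funext j; fin_cases j <;> simp [fMt] <;> norm_num
  have e6 : fMt ![1,0,1] = ![3,-1,2] := by funext j; fin_cases j <;> simp [fMt] <;> norm_num
  have e7 : fMt ![0,-1,2] = ![0,0,1] := by funext j; fin_cases j <;> simp [fMt] <;> norm_num
  have e8 : fMt ![-1,-1,2] = ![-2,1,0] := by funext j; fin_cases j <;> simp [fMt] <;> norm_num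
  simp only [VD', U, Set.image_insert_eq, Set.image_singleton, e1, e2, e3, e4, e5, e6, e7, e8]

lemma T_pair (t : E3) (ht : t ∈ T) : ∀ x ∈ VD', -1 ≤ ∑ i, t i * x i := by
  intro x hx
  simp only [T, Set.mem_insert_iff, Set.mem_singleton_iff] at ht
  simp only [VD', Set.mem_insert_iff, Set.mem_singleton_iff] at hx
  rcases ht with rfl|rfl|rfl|rfl|rfl|rfl <;> rcases hx with rfl|rfl|rfl|rfl|rfl|rfl|rfl|rfl <;>
    norm_num [Fin.sum_univ_three, Matrix.cons_val_two, Matrix.tail_cons, Matrix.head_cons]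

lemma key_image : fM '' (convexHull ℝ VD) = dl (convexHull ℝ VD') := by
  have himg : fM '' (convexHull ℝ VD) = convexHull ℝ (fM '' VD) := fML.image_convexHull VD
  rw [himg, image_VD]
  apply Set.Subset.antisymm
  · exact convexHull_min (fun t ht => (mem_dl_hull _ _).2 (T_pair t ht)) (dl_convex _)
  · intro y hy
    exact P_subset_hullT y ((mem_dl_hull _ _).1 hy)

lemma zero_mem_D' : (0 : E3) ∈ convexHull ℝ VD' := by
  have h5 : (![1,2,-1] : E3) ∈ convexHull ℝ VD' := subset_convexHull ℝ _ (by simp [VD'])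
  have h8 : (![-1,-1,2] : E3) ∈ convexHull ℝ VD' := subset_convexHull ℝ _ (by simp [VD'])
  have h2 : (![0,-1,-1] : E3) ∈ convexHull ℝ VD' := subset_convexHull ℝ _ (by simp [VD'])
  have hy : (0 : E3) = (1/3 : ℝ) • ![1,2,-1] + (1/3 : ℝ) • ![-1,-1,2] + (1/3 : ℝ) • ![0,-1,-1] := by
    funext j; fin_cases j <;> norm_num
  rw [hy]
  have := (convex_convexHull ℝ VD').sum_mem (t := (Finset.univ : Finset (Fin 3)))
    (w := ![1/3, 1/3, 1/3]) (z := ![![1,2,-1], ![-1,-1,2], ![0,-1,-1]])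
    (by intro i _; fin_cases i <;> norm_num)
    (by norm_num [Fin.sum_univ_three, Matrix.cons_val_two, Matrix.tail_cons, Matrix.head_cons])
    (by intro i _; fin_cases i <;> simpa)
  simpa [Fin.sum_univ_three] using this

lemma clm_eval (f : E3 →L[ℝ] ℝ) (x : E3) :
    f x = ∑ i, x i * f (Pi.single i 1) := by
  have hx : x = ∑ i, x i • (Pi.single i 1 : E3) := by
    funext j
    rw [Finset.sum_apply]
    simp [Pi.single_apply, Fin.sum_univ_three]
  conv_lhs => rw [hx]
  rw [map_sum]
  congr 1
  funext i
  simp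

lemma bipolar (y : E3) (hy : y ∈ dl (dl (convexHull ℝ VD'))) : y ∈ convexHull ℝ VD' := by
  by_contra hmem
  have hfin : VD'.Finite := by
    simp only [VD']
    exact Set.toFinite _
  have hclosed : IsClosed (convexHull ℝ VD') := (hfin.isCompact_convexHull ℝ).isClosed
  obtain ⟨f, u, hfu, huy⟩ :=
    geometric_hahn_banach_closed_point (convex_convexHull ℝ VD') hclosed hmem
  have hu : 0 < u := by
    have := hfu 0 zero_mem_D'
    simpa using this
  set w : E3 := fun i => -(f (Pi.single i 1)) / u with hw
  have hwdl : w ∈ dl (convexHull ℝ VD') := by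
    intro x hx
    have hfx : f x < u := hfu x hx
    have : ∑ i, w i * x i = -(f x) / u := by
      rw [clm_eval f x, ← Finset.sum_neg_distrib, Finset.sum_div]
      exact Finset.sum_congr rfl (fun i _ => by simp only [hw]; ring)
    rw [this]
    rw [le_div_iff₀ hu] at *
    nlinarith
  have := hy w hwdl
  have hyw : ∑ i, y i * w i = -(f y) / u := by
    rw [clm_eval f y, ← Finset.sum_neg_distrib, Finset.sum_div]
    exact Finset.sum_congr rfl (fun i _ => by simp only [hw]; ring)
  rw [hyw] at this
  rw [le_div_iff₀ hu] at this
  nlinarith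

lemma dual_VD : dl (convexHull ℝ VD) = fMt '' (convexHull ℝ VD') := by
  ext y
  constructor
  · intro hy
    have hfN : fN y ∈ convexHull ℝ VD' := by
      apply bipolar
      intro t ht
      rw [← key_image] at ht
      obtain ⟨v, hv, rfl⟩ := ht
      rw [pairKey]
      exact hy v hv
    exact ⟨fN y, hfN, fMt_fN y⟩
  · rintro ⟨x, hx, rfl⟩
    intro v hv
    have h1 : fM v ∈ dl (convexHull ℝ VD') := key_image ▸ Set.mem_image_of_mem fM hv
    have h2 := h1 x hx
    have e : ∑ i, fMt x i * v i = ∑ i, (fM v) i * x i := by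
      simp [fMt, fM, Fin.sum_univ_three]; ring
    rw [e]; exact h2

lemma dual_VD_hull : dl (convexHull ℝ VD) = convexHull ℝ U := by
  rw [dual_VD]
  have himg : fMt '' (convexHull ℝ VD') = convexHull ℝ (fMt '' VD') := fMtL.image_convexHull VD'
  rw [himg, image_VD']


lemma zero_interior : (0 : E3) ∈ interior (convexHull ℝ VD) := by
  have hO : IsOpen ({v : E3 | -1 < v 0 - v 1} ∩ {v | -1 < -3*v 0 - 2*v 2} ∩
      {v | -1 < -5*v 0 + v 1 - 3*v 2} ∩ {v | -1 < v 0 + v 1} ∩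
      {v | -1 < 5*v 0 - v 1 + 2*v 2} ∩ {v | -1 < 3*v 0 - v 1 + 2*v 2} ∩
      {v | -1 < v 2} ∩ {v | -1 < -2*v 0 + v 1}) := by
    repeat' apply IsOpen.inter
    all_goals exact isOpen_lt continuous_const (by fun_prop)
  apply mem_interior.2
  refine ⟨_, ?_, hO, ?_⟩
  · intro v hv
    obtain ⟨⟨⟨⟨⟨⟨⟨o1, o2⟩, o3⟩, o4⟩, o5⟩, o6⟩, o7⟩, o8⟩ := hv
    simp only [Set.mem_setOf_eq] at o1 o2 o3 o4 o5 o6 o7 o8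
    have hmem : fM v ∈ dl (convexHull ℝ VD') := by
      rw [mem_dl_hull]
      intro x hx
      simp only [VD', Set.mem_insert_iff, Set.mem_singleton_iff] at hx
      rcases hx with rfl|rfl|rfl|rfl|rfl|rfl|rfl|rfl <;>
        (simp [fM, Fin.sum_univ_three]; linarith)
    rw [← key_image] at hmem
    obtain ⟨w, hw, he⟩ := hmem
    rwa [← fM_inj he]
  · refine ⟨⟨⟨⟨⟨⟨⟨?_, ?_⟩, ?_⟩, ?_⟩, ?_⟩, ?_⟩, ?_⟩, ?_⟩ <;> simp

def Sint : Finset (Fin 3 → ℤ) :=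
  {![1,-1,0], ![-3,0,-2], ![-5,1,-3], ![1,1,0], ![5,-1,2], ![3,-1,2], ![0,0,1], ![-2,1,0]}

lemma cast_S : (fun (p : Fin 3 → ℤ) (i : Fin 3) => ((p i : ℝ))) '' (Sint : Set (Fin 3 → ℤ)) = U := by
  have e1 : (fun i : Fin 3 => ((((![1,-1,0] : Fin 3 → ℤ)) i : ℝ))) = (![1,-1,0] : E3) := by
    funext j; fin_cases j <;> simp
  have e2 : (fun i : Fin 3 => ((((![-3,0,-2] : Fin 3 → ℤ)) i : ℝ))) = (![-3,0,-2] : E3) := by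
    funext j; fin_cases j <;> simp
  have e3 : (fun i : Fin 3 => ((((![-5,1,-3] : Fin 3 → ℤ)) i : ℝ))) = (![-5,1,-3] : E3) := by
    funext j; fin_cases j <;> simp
  have e4 : (fun i : Fin 3 => ((((![1,1,0] : Fin 3 → ℤ)) i : ℝ))) = (![1,1,0] : E3) := by
    funext j; fin_cases j <;> simp
  have e5 : (fun i : Fin 3 => ((((![5,-1,2] : Fin 3 → ℤ)) i : ℝ))) = (![5,-1,2] : E3) := by
    funext j; fin_cases j <;> simp
  have e6 : (fun i : Fin 3 => ((((![3,-1,2] : Fin 3 → ℤ)) i : ℝ))) = (![3,-1,2] : E3) := by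
    funext j; fin_cases j <;> simp
  have e7 : (fun i : Fin 3 => ((((![0,0,1] : Fin 3 → ℤ)) i : ℝ))) = (![0,0,1] : E3) := by
    funext j; fin_cases j <;> simp
  have e8 : (fun i : Fin 3 => ((((![-2,1,0] : Fin 3 → ℤ)) i : ℝ))) = (![-2,1,0] : E3) := by
    funext j; fin_cases j <;> simp
  simp only [Sint, Finset.coe_insert, Finset.coe_singleton, Set.image_insert_eq,
    Set.image_singleton, U, e1, e2, e3, e4, e5, e6, e7, e8]

end Stmt6

open Stmt6 in
/-- det M = 1, the map induced by M sends Δ bijectively onto (Δ')*;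
consequently Δ is reflexive and Δ* is isomorphic to Δ' under a lattice
isometry of ℤ³. -/
theorem stmt_6 :
    let Δ : Set (Fin 3 → ℝ) := convexHull ℝ ({![-1,0,2], ![0,1,0], ![1,2,-1], ![1,1,-1], ![0,-1,0], ![0,-1,-1]} : Set (Fin 3 → ℝ))
    let Δ' : Set (Fin 3 → ℝ) := convexHull ℝ ({![1,0,-1], ![0,-1,-1], ![-1,-1,-1], ![-1,2,-1], ![1,2,-1], ![1,0,1], ![0,-1,2], ![-1,-1,2]} : Set (Fin 3 → ℝ))
    let M : Matrix (Fin 3) (Fin 3) ℤ := !![2,2,1; -1,0,0; 1,1,1]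
    let Mr : Matrix (Fin 3) (Fin 3) ℝ := M.map (Int.cast : ℤ → ℝ)
    let dual : Set (Fin 3 → ℝ) → Set (Fin 3 → ℝ) :=
      fun P => {y | ∀ x ∈ P, -1 ≤ ∑ i, y i * x i}
    M.det = 1 ∧
    Set.BijOn (fun v => Matrix.vecMul v Mr) Δ (dual Δ') ∧
    ((0 : Fin 3 → ℝ) ∈ interior Δ ∧
      ∃ S : Finset (Fin 3 → ℤ),
        dual Δ = convexHull ℝ ((fun p i => ((p i : ℝ))) '' (S : Set (Fin 3 → ℤ)))) ∧
    ∃ N : Matrix (Fin 3) (Fin 3) ℤ, (N.det = 1 ∨ N.det = -1) ∧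
      (fun v => Matrix.vecMul v (N.map (Int.cast : ℤ → ℝ))) '' (dual Δ) = Δ' := by
  intro Δ Δ' M Mr dual
  refine ⟨detM, ?_, ⟨zero_interior, ?_⟩, ?_⟩
  · have e1 : (fun v : Fin 3 → ℝ => Matrix.vecMul v Mr) = fM := hMr
    rw [e1]
    have e2 : fM '' Δ = dual Δ' := key_image
    rw [← e2]
    exact fM_inj.injOn.bijOn_image
  · refine ⟨Sint, ?_⟩
    have e : dual Δ = convexHull ℝ U := dual_VD_hull
    rw [e, cast_S]
  · refine ⟨!![0,1,-1; -1,1,0; 0,-1,2], Or.inl detN, ?_⟩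
    rw [hNr]
    have e : dual Δ = fMt '' Δ' := dual_VD
    rw [e, ← Set.image_comp]
    have e2 : fN ∘ fMt = id := funext fN_fMt
    rw [e2, Set.image_id]
end

section
/- Let Δ ⊂ ℝ³ be the convex hull of (−1,0,2), (0,1,0), (1,2,−1), (1,1,−1), (0,−1,0), (0,−1,−1) (a reflexive polytope). For every edge Γ of Δ, at least one of the following holds: the only points of ℤ³ on Γ are its two endpoints, or the only points of ℤ³ on the dual edge Γ* = {y ∈ Δ* : ⟨y, x⟩ = −1 for all x ∈ Γ} are its two endpoints. (Equivalently, l*(Γ)·l*(Γ*) = 0 for all edges Γ, so the sum Σ_Γ l*(Γ) l*(Γ*) over all edges of Δ vanishes.) -/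
lemma bezout3 (d0 d1 d2 : ℤ) (h : Int.gcd (Int.gcd d0 d1) d2 = 1) :
    ∃ c0 c1 c2 : ℤ, c0 * d0 + c1 * d1 + c2 * d2 = 1 := by
  have h2 := Int.gcd_eq_gcd_ab (Int.gcd d0 d1) d2
  have h1 := Int.gcd_eq_gcd_ab d0 d1
  rw [h] at h2
  push_cast at h2
  exact ⟨Int.gcdA d0 d1 * Int.gcdA (Int.gcd d0 d1) d2,
    Int.gcdB d0 d1 * Int.gcdA (Int.gcd d0 d1) d2, Int.gcdB (Int.gcd d0 d1) d2,
    by linear_combination -h2 - Int.gcdA (Int.gcd d0 d1) d2 * h1⟩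

lemma key3 (a0 a1 a2 b0 b1 b2 : ℤ)
    (hg : Int.gcd (Int.gcd (b0-a0) (b1-a1)) (b2-a2) = 1)
    (p : Fin 3 → ℤ) (t : ℝ) (ht0 : 0 ≤ t) (ht1 : t ≤ 1)
    (h0 : (p 0 : ℝ) = a0 + t * (b0 - a0))
    (h1 : (p 1 : ℝ) = a1 + t * (b1 - a1))
    (h2 : (p 2 : ℝ) = a2 + t * (b2 - a2)) :
    ((p 0 : ℝ) = a0 ∧ (p 1 : ℝ) = a1 ∧ (p 2 : ℝ) = a2) ∨
    ((p 0 : ℝ) = b0 ∧ (p 1 : ℝ) = b1 ∧ (p 2 : ℝ) = b2) := by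
  obtain ⟨c0, c1, c2, hc⟩ := bezout3 _ _ _ hg
  have hc' : (c0:ℝ) * (b0 - a0) + (c1:ℝ) * (b1 - a1) + (c2:ℝ) * (b2 - a2) = 1 := by
    exact_mod_cast hc
  set N : ℤ := c0 * (p 0 - a0) + c1 * (p 1 - a1) + c2 * (p 2 - a2) with hN
  have hNt : (N : ℝ) = t := by
    push_cast [hN]
    rw [h0, h1, h2]
    linear_combination t * hc'
  have hN01 : N = 0 ∨ N = 1 := by
    have l0 : (0:ℝ) ≤ (N:ℝ) := by rw [hNt]; exact ht0
    have l1 : (N:ℝ) ≤ 1 := by rw [hNt]; exact ht1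
    have m0 : (0:ℤ) ≤ N := by exact_mod_cast l0
    have m1 : N ≤ 1 := by exact_mod_cast l1
    omega
  rcases hN01 with h | h
  · left
    have ht : t = 0 := by rw [← hNt, h]; norm_num
    rw [ht] at h0 h1 h2
    exact ⟨by rw [h0]; ring, by rw [h1]; ring, by rw [h2]; ring⟩
  · right
    have ht : t = 1 := by rw [← hNt, h]; norm_num
    rw [ht] at h0 h1 h2
    exact ⟨by rw [h0]; ring, by rw [h1]; ring, by rw [h2]; ring⟩

lemma key3i (v w : Fin 3 → ℝ) (a0 a1 a2 b0 b1 b2 : ℤ)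
    (hveq : v = ![(a0:ℝ), (a1:ℝ), (a2:ℝ)]) (hweq : w = ![(b0:ℝ), (b1:ℝ), (b2:ℝ)])
    (hg : Int.gcd (Int.gcd (b0-a0) (b1-a1)) (b2-a2) = 1)
    (p : Fin 3 → ℤ) (t : ℝ) (ht0 : 0 ≤ t) (ht1 : t ≤ 1)
    (heq : v + t • (w - v) = fun i => (p i : ℝ)) :
    (fun i => (p i : ℝ)) = v ∨ (fun i => (p i : ℝ)) = w := by
  subst hveq hweq
  have h0 := congrFun heq 0
  have h1 := congrFun heq 1
  have h2 := congrFun heq 2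
  simp only [Pi.add_apply, Pi.smul_apply, Pi.sub_apply, smul_eq_mul,
    Matrix.cons_val_zero, Matrix.cons_val_one, Matrix.head_cons,
    Matrix.cons_val_two, Matrix.tail_cons] at h0 h1 h2
  rcases key3 a0 a1 a2 b0 b1 b2 hg p t ht0 ht1 (by linarith [h0])
      (by linarith [h1]) (by linarith [h2]) with ⟨e0, e1, e2⟩ | ⟨e0, e1, e2⟩
  · left; funext i; fin_cases i
    · exact e0
    · exact e1
    · exact e2
  · right; funext i; fin_cases i
    · exact e0
    · exact e1
    · exact e2

lemma collin3 {Γ : Set (Fin 3 → ℝ)} (hrank : Module.finrank ℝ (vectorSpan ℝ Γ) = 1)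
    {x y z : Fin 3 → ℝ} (hx : x ∈ Γ) (hy : y ∈ Γ) (hz : z ∈ Γ) (hxy : x ≠ y) :
    ∃ c : ℝ, z - x = c • (y - x) := by
  have hmem : y - x ∈ vectorSpan ℝ Γ := by
    simpa using vsub_mem_vectorSpan ℝ hy hx
  have hne : y - x ≠ 0 := sub_ne_zero.mpr (Ne.symm hxy)
  have hle : Submodule.span ℝ {y - x} ≤ vectorSpan ℝ Γ :=
    Submodule.span_le.mpr (by simpa using hmem)
  have heq : Submodule.span ℝ {y - x} = vectorSpan ℝ Γ := by
    apply Submodule.eq_of_le_of_finrank_le hle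
    rw [hrank, finrank_span_singleton hne]
  have hz' : z - x ∈ Submodule.span ℝ ({y - x} : Set (Fin 3 → ℝ)) := by
    rw [heq]; simpa using vsub_mem_vectorSpan ℝ hz hx
  obtain ⟨c, hc⟩ := Submodule.mem_span_singleton.mp hz'
  exact ⟨c, hc.symm⟩

lemma BEfalse {Γ : Set (Fin 3 → ℝ)}
    (hexp : IsExposed ℝ (convexHull ℝ ({![-1,0,2], ![0,1,0], ![1,2,-1], ![1,1,-1], ![0,-1,0], ![0,-1,-1]} : Set (Fin 3 → ℝ))) Γ)
    (hrank : Module.finrank ℝ (vectorSpan ℝ Γ) = 1)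
    (hB : (![0,1,0] : Fin 3 → ℝ) ∈ Γ) (hE : (![0,-1,0] : Fin 3 → ℝ) ∈ Γ) : False := by
  set S : Set (Fin 3 → ℝ) := {![-1,0,2], ![0,1,0], ![1,2,-1], ![1,1,-1], ![0,-1,0], ![0,-1,-1]} with hS
  set Δ : Set (Fin 3 → ℝ) := convexHull ℝ S with hΔ
  obtain ⟨l, hl⟩ := hexp ⟨_, hB⟩
  have hAΔ : (![-1,0,2] : Fin 3 → ℝ) ∈ Δ := subset_convexHull ℝ S (by simp [hS])
  have hCΔ : (![1,2,-1] : Fin 3 → ℝ) ∈ Δ := subset_convexHull ℝ S (by simp [hS])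
  have hFΔ : (![0,-1,-1] : Fin 3 → ℝ) ∈ Δ := subset_convexHull ℝ S (by simp [hS])
  have hBmem := hB; rw [hl] at hBmem
  have hEmem := hE; rw [hl] at hEmem
  have hmaxB : ∀ y ∈ Δ, l y ≤ l ![0,1,0] := hBmem.2
  have hEneg : (![0,-1,0] : Fin 3 → ℝ) = -![0,1,0] := by
    funext i; fin_cases i <;> norm_num
  have hlE : l ![0,-1,0] = - l ![0,1,0] := by rw [hEneg, map_neg]
  have hBE : l ![0,1,0] ≤ l ![0,-1,0] := hEmem.2 _ hBmem.1
  have hEB : l ![0,-1,0] ≤ l ![0,1,0] := hmaxB _ hEmem.1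
  have hlB0 : l ![0,1,0] = 0 := by rw [hlE] at hBE hEB; linarith
  have hsum : (![-1,0,2] : Fin 3 → ℝ) + ![1,2,-1] + ![0,-1,0] + ![0,-1,-1] = 0 := by
    funext i; fin_cases i <;> norm_num
  have hlsum : l ![-1,0,2] + l ![1,2,-1] + l ![0,-1,0] + l ![0,-1,-1] = 0 := by
    rw [← map_add, ← map_add, ← map_add, hsum, map_zero]
  have hA0 : l ![-1,0,2] = 0 := by
    have h1 := hmaxB _ hAΔ
    have h2 := hmaxB _ hCΔ
    have h3 := hmaxB _ hFΔ
    rw [hlB0] at h1 h2 h3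
    rw [hlE, hlB0] at hlsum
    linarith
  have hAΓ : (![-1,0,2] : Fin 3 → ℝ) ∈ Γ := by
    rw [hl]
    exact ⟨hAΔ, fun y hy => (hmaxB y hy).trans (by rw [hlB0, hA0])⟩
  have hBEne : (![0,1,0] : Fin 3 → ℝ) ≠ ![0,-1,0] := by
    intro h
    have := congrFun h 1
    norm_num at this
  obtain ⟨c, hc⟩ := collin3 hrank hB hE hAΓ hBEne
  have := congrFun hc 0
  norm_num at this

/-- For every edge Γ of the reflexive polytope Δ, either Γ has no interior
lattice points or its dual edge Γ* has none: every lattice point on Γ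
(resp. on Γ*) is an extreme point, i.e. an endpoint. -/
theorem stmt_9 :
    let Δ : Set (Fin 3 → ℝ) := convexHull ℝ ({![-1,0,2], ![0,1,0], ![1,2,-1], ![1,1,-1], ![0,-1,0], ![0,-1,-1]} : Set (Fin 3 → ℝ))
    let dual : Set (Fin 3 → ℝ) := {y | ∀ x ∈ Δ, -1 ≤ ∑ i, y i * x i}
    ∀ Γ : Set (Fin 3 → ℝ), IsExposed ℝ Δ Γ →
      Module.finrank ℝ (vectorSpan ℝ Γ) = 1 →
      (∀ p : Fin 3 → ℤ, (fun i => (p i : ℝ)) ∈ Γ →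
          (fun i => (p i : ℝ)) ∈ Set.extremePoints ℝ Γ) ∨
      (∀ p : Fin 3 → ℤ,
          (fun i => (p i : ℝ)) ∈ {y ∈ dual | ∀ x ∈ Γ, ∑ i, y i * x i = -1} →
          (fun i => (p i : ℝ)) ∈
            Set.extremePoints ℝ {y ∈ dual | ∀ x ∈ Γ, ∑ i, y i * x i = -1}) := by
  intro Δ dual Γ hexp hrank
  left
  have hSfin : ({![-1,0,2], ![0,1,0], ![1,2,-1], ![1,1,-1], ![0,-1,0], ![0,-1,-1]} : Set (Fin 3 → ℝ)).Finite := by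
    exact (((((Set.finite_singleton _).insert _).insert _).insert _).insert _).insert _
  have hΔconv : Convex ℝ Δ := convex_convexHull ℝ _
  have hΔcomp : IsCompact Δ := hSfin.isCompact_convexHull (𝕜 := ℝ)
  have hΓconv : Convex ℝ Γ := hexp.convex hΔconv
  have hΓcomp : IsCompact Γ := hexp.isCompact hΔcomp
  have hTS : Set.extremePoints ℝ Γ ⊆ ({![-1,0,2], ![0,1,0], ![1,2,-1], ![1,1,-1], ![0,-1,0], ![0,-1,-1]} : Set (Fin 3 → ℝ)) :=
    fun x hx => extremePoints_convexHull_subset (hexp.isExtreme.extremePoints_subset_extremePoints hx)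
  have hKM : Γ = convexHull ℝ (Set.extremePoints ℝ Γ) := by
    have h1 := closure_convexHull_extremePoints hΓcomp hΓconv
    have h2 : IsCompact (convexHull ℝ (Set.extremePoints ℝ Γ)) :=
      (hSfin.subset hTS).isCompact_convexHull (𝕜 := ℝ)
    rw [← h2.isClosed.closure_eq]
    exact h1.symm
  obtain ⟨v, hvT, w, hwT, hvw⟩ : ∃ v ∈ Set.extremePoints ℝ Γ, ∃ w ∈ Set.extremePoints ℝ Γ, v ≠ w := by
    by_contra hcon
    push_neg at hcon
    have hTsub : (Set.extremePoints ℝ Γ).Subsingleton := fun a ha b hb => hcon a ha b hb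
    have hΓsub : Γ.Subsingleton := by
      rcases hTsub.eq_empty_or_singleton with h | ⟨x, h⟩
      · rw [hKM, h, convexHull_empty]
        exact Set.subsingleton_empty
      · rw [hKM, h, convexHull_singleton]
        exact Set.subsingleton_singleton
    have hbot : vectorSpan ℝ Γ = ⊥ := by
      rcases hΓsub.eq_empty_or_singleton with h | ⟨x, h⟩
      · rw [h]; exact vectorSpan_empty ℝ (Fin 3 → ℝ)
      · rw [h]; exact vectorSpan_singleton ℝ x
    rw [hbot] at hrank
    simp at hrank
  have hvΓ : v ∈ Γ := extremePoints_subset hvT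
  have hwΓ : w ∈ Γ := extremePoints_subset hwT
  have hTvw : Set.extremePoints ℝ Γ ⊆ {v, w} := by
    intro u huT
    by_contra huvw
    simp only [Set.mem_insert_iff, Set.mem_singleton_iff, not_or] at huvw
    obtain ⟨huv, huw⟩ := huvw
    have huΓ : u ∈ Γ := extremePoints_subset huT
    obtain ⟨c, hc⟩ := collin3 hrank hvΓ hwΓ huΓ hvw
    have hc0 : c ≠ 0 := by
      rintro rfl
      rw [zero_smul] at hc
      exact huv (sub_eq_zero.mp hc)
    have hc1 : c ≠ 1 := by
      rintro rfl
      rw [one_smul] at hc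
      exact huw (sub_left_inj.mp hc)
    have hu' : u = c • (w - v) + v := sub_eq_iff_eq_add.mp hc
    rcases lt_trichotomy c 0 with hneg | hz | hpos
    · have hd : c - 1 < 0 := by linarith
      have hdne : c - 1 ≠ 0 := by linarith
      have hmem : v ∈ openSegment ℝ u w := by
        rw [openSegment_eq_image']
        refine ⟨c / (c - 1), ⟨?_, ?_⟩, ?_⟩
        · rw [div_pos_iff]
          right
          exact ⟨hneg, hd⟩
        · rw [div_lt_one_iff]
          right; right
          exact ⟨hd, by linarith⟩
        · rw [hu']
          match_scalars <;> field_simp <;> ring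
      exact huv (hvT.2 huΓ hwΓ hmem)
    · exact hc0 hz
    · rcases lt_trichotomy c 1 with hlt | he1 | hgt
      · have hmem : u ∈ openSegment ℝ v w := by
          rw [openSegment_eq_image']
          exact ⟨c, ⟨hpos, hlt⟩, by rw [hu']; exact add_comm v (c • (w - v))⟩
        exact huv (huT.2 hvΓ hwΓ hmem).symm
      · exact hc1 he1
      · have hmem : w ∈ openSegment ℝ v u := by
          rw [openSegment_eq_image']
          refine ⟨1 / c, ⟨by positivity, by (rw [div_lt_one (by linarith)]; exact hgt)⟩, ?_⟩
          rw [hu']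
          match_scalars <;> field_simp <;> ring
        exact huw (hwT.2 huΓ hvΓ (by rwa [openSegment_symm] at hmem))
  have hΓseg : Γ ⊆ segment ℝ v w := by
    rw [hKM]
    refine (convexHull_mono hTvw).trans ?_
    rw [convexHull_pair]
  intro p hp
  have hp' := hΓseg hp
  rw [segment_eq_image'] at hp'
  obtain ⟨t, ⟨ht0, ht1⟩, heq⟩ := hp'
  have hvS := hTS hvT
  have hwS := hTS hwT
  simp only [Set.mem_insert_iff, Set.mem_singleton_iff] at hvS hwS
  rcases hvS with hveq | hveq | hveq | hveq | hveq | hveq <;>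
      rcases hwS with hweq | hweq | hweq | hweq | hweq | hweq
  · exact absurd (hveq.trans hweq.symm) hvw
  · rcases key3i v w (-1) 0 2 0 1 0 (by rw [hveq]; funext i; fin_cases i <;> norm_num) (by rw [hweq]; funext i; fin_cases i <;> norm_num) (by decide) p t ht0 ht1 heq with h | h
    · rw [h]; exact hvT
    · rw [h]; exact hwT
  · rcases key3i v w (-1) 0 2 1 2 (-1) (by rw [hveq]; funext i; fin_cases i <;> norm_num) (by rw [hweq]; funext i; fin_cases i <;> norm_num) (by decide) p t ht0 ht1 heq with h | h
    · rw [h]; exact hvT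
    · rw [h]; exact hwT
  · rcases key3i v w (-1) 0 2 1 1 (-1) (by rw [hveq]; funext i; fin_cases i <;> norm_num) (by rw [hweq]; funext i; fin_cases i <;> norm_num) (by decide) p t ht0 ht1 heq with h | h
    · rw [h]; exact hvT
    · rw [h]; exact hwT
  · rcases key3i v w (-1) 0 2 0 (-1) 0 (by rw [hveq]; funext i; fin_cases i <;> norm_num) (by rw [hweq]; funext i; fin_cases i <;> norm_num) (by decide) p t ht0 ht1 heq with h | h
    · rw [h]; exact hvT
    · rw [h]; exact hwT
  · rcases key3i v w (-1) 0 2 0 (-1) (-1) (by rw [hveq]; funext i; fin_cases i <;> norm_num) (by rw [hweq]; funext i; fin_cases i <;> norm_num) (by decide) p t ht0 ht1 heq with h | h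
    · rw [h]; exact hvT
    · rw [h]; exact hwT
  · rcases key3i v w 0 1 0 (-1) 0 2 (by rw [hveq]; funext i; fin_cases i <;> norm_num) (by rw [hweq]; funext i; fin_cases i <;> norm_num) (by decide) p t ht0 ht1 heq with h | h
    · rw [h]; exact hvT
    · rw [h]; exact hwT
  · exact absurd (hveq.trans hweq.symm) hvw
  · rcases key3i v w 0 1 0 1 2 (-1) (by rw [hveq]; funext i; fin_cases i <;> norm_num) (by rw [hweq]; funext i; fin_cases i <;> norm_num) (by decide) p t ht0 ht1 heq with h | h
    · rw [h]; exact hvT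
    · rw [h]; exact hwT
  · rcases key3i v w 0 1 0 1 1 (-1) (by rw [hveq]; funext i; fin_cases i <;> norm_num) (by rw [hweq]; funext i; fin_cases i <;> norm_num) (by decide) p t ht0 ht1 heq with h | h
    · rw [h]; exact hvT
    · rw [h]; exact hwT
  · exact (BEfalse hexp hrank (hveq ▸ hvΓ) (hweq ▸ hwΓ)).elim
  · rcases key3i v w 0 1 0 0 (-1) (-1) (by rw [hveq]; funext i; fin_cases i <;> norm_num) (by rw [hweq]; funext i; fin_cases i <;> norm_num) (by decide) p t ht0 ht1 heq with h | h
    · rw [h]; exact hvT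
    · rw [h]; exact hwT
  · rcases key3i v w 1 2 (-1) (-1) 0 2 (by rw [hveq]; funext i; fin_cases i <;> norm_num) (by rw [hweq]; funext i; fin_cases i <;> norm_num) (by decide) p t ht0 ht1 heq with h | h
    · rw [h]; exact hvT
    · rw [h]; exact hwT
  · rcases key3i v w 1 2 (-1) 0 1 0 (by rw [hveq]; funext i; fin_cases i <;> norm_num) (by rw [hweq]; funext i; fin_cases i <;> norm_num) (by decide) p t ht0 ht1 heq with h | h
    · rw [h]; exact hvT
    · rw [h]; exact hwT
  · exact absurd (hveq.trans hweq.symm) hvw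
  · rcases key3i v w 1 2 (-1) 1 1 (-1) (by rw [hveq]; funext i; fin_cases i <;> norm_num) (by rw [hweq]; funext i; fin_cases i <;> norm_num) (by decide) p t ht0 ht1 heq with h | h
    · rw [h]; exact hvT
    · rw [h]; exact hwT
  · rcases key3i v w 1 2 (-1) 0 (-1) 0 (by rw [hveq]; funext i; fin_cases i <;> norm_num) (by rw [hweq]; funext i; fin_cases i <;> norm_num) (by decide) p t ht0 ht1 heq with h | h
    · rw [h]; exact hvT
    · rw [h]; exact hwT
  · rcases key3i v w 1 2 (-1) 0 (-1) (-1) (by rw [hveq]; funext i; fin_cases i <;> norm_num) (by rw [hweq]; funext i; fin_cases i <;> norm_num) (by decide) p t ht0 ht1 heq with h | h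
    · rw [h]; exact hvT
    · rw [h]; exact hwT
  · rcases key3i v w 1 1 (-1) (-1) 0 2 (by rw [hveq]; funext i; fin_cases i <;> norm_num) (by rw [hweq]; funext i; fin_cases i <;> norm_num) (by decide) p t ht0 ht1 heq with h | h
    · rw [h]; exact hvT
    · rw [h]; exact hwT
  · rcases key3i v w 1 1 (-1) 0 1 0 (by rw [hveq]; funext i; fin_cases i <;> norm_num) (by rw [hweq]; funext i; fin_cases i <;> norm_num) (by decide) p t ht0 ht1 heq with h | h
    · rw [h]; exact hvT
    · rw [h]; exact hwT
  · rcases key3i v w 1 1 (-1) 1 2 (-1) (by rw [hveq]; funext i; fin_cases i <;> norm_num) (by rw [hweq]; funext i; fin_cases i <;> norm_num) (by decide) p t ht0 ht1 heq with h | h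
    · rw [h]; exact hvT
    · rw [h]; exact hwT
  · exact absurd (hveq.trans hweq.symm) hvw
  · rcases key3i v w 1 1 (-1) 0 (-1) 0 (by rw [hveq]; funext i; fin_cases i <;> norm_num) (by rw [hweq]; funext i; fin_cases i <;> norm_num) (by decide) p t ht0 ht1 heq with h | h
    · rw [h]; exact hvT
    · rw [h]; exact hwT
  · rcases key3i v w 1 1 (-1) 0 (-1) (-1) (by rw [hveq]; funext i; fin_cases i <;> norm_num) (by rw [hweq]; funext i; fin_cases i <;> norm_num) (by decide) p t ht0 ht1 heq with h | h
    · rw [h]; exact hvT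
    · rw [h]; exact hwT
  · rcases key3i v w 0 (-1) 0 (-1) 0 2 (by rw [hveq]; funext i; fin_cases i <;> norm_num) (by rw [hweq]; funext i; fin_cases i <;> norm_num) (by decide) p t ht0 ht1 heq with h | h
    · rw [h]; exact hvT
    · rw [h]; exact hwT
  · exact (BEfalse hexp hrank (hweq ▸ hwΓ) (hveq ▸ hvΓ)).elim
  · rcases key3i v w 0 (-1) 0 1 2 (-1) (by rw [hveq]; funext i; fin_cases i <;> norm_num) (by rw [hweq]; funext i; fin_cases i <;> norm_num) (by decide) p t ht0 ht1 heq with h | h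
    · rw [h]; exact hvT
    · rw [h]; exact hwT
  · rcases key3i v w 0 (-1) 0 1 1 (-1) (by rw [hveq]; funext i; fin_cases i <;> norm_num) (by rw [hweq]; funext i; fin_cases i <;> norm_num) (by decide) p t ht0 ht1 heq with h | h
    · rw [h]; exact hvT
    · rw [h]; exact hwT
  · exact absurd (hveq.trans hweq.symm) hvw
  · rcases key3i v w 0 (-1) 0 0 (-1) (-1) (by rw [hveq]; funext i; fin_cases i <;> norm_num) (by rw [hweq]; funext i; fin_cases i <;> norm_num) (by decide) p t ht0 ht1 heq with h | h
    · rw [h]; exact hvT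
    · rw [h]; exact hwT
  · rcases key3i v w 0 (-1) (-1) (-1) 0 2 (by rw [hveq]; funext i; fin_cases i <;> norm_num) (by rw [hweq]; funext i; fin_cases i <;> norm_num) (by decide) p t ht0 ht1 heq with h | h
    · rw [h]; exact hvT
    · rw [h]; exact hwT
  · rcases key3i v w 0 (-1) (-1) 0 1 0 (by rw [hveq]; funext i; fin_cases i <;> norm_num) (by rw [hweq]; funext i; fin_cases i <;> norm_num) (by decide) p t ht0 ht1 heq with h | h
    · rw [h]; exact hvT
    · rw [h]; exact hwT
  · rcases key3i v w 0 (-1) (-1) 1 2 (-1) (by rw [hveq]; funext i; fin_cases i <;> norm_num) (by rw [hweq]; funext i; fin_cases i <;> norm_num) (by decide) p t ht0 ht1 heq with h | h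
    · rw [h]; exact hvT
    · rw [h]; exact hwT
  · rcases key3i v w 0 (-1) (-1) 1 1 (-1) (by rw [hveq]; funext i; fin_cases i <;> norm_num) (by rw [hweq]; funext i; fin_cases i <;> norm_num) (by decide) p t ht0 ht1 heq with h | h
    · rw [h]; exact hvT
    · rw [h]; exact hwT
  · rcases key3i v w 0 (-1) (-1) 0 (-1) 0 (by rw [hveq]; funext i; fin_cases i <;> norm_num) (by rw [hweq]; funext i; fin_cases i <;> norm_num) (by decide) p t ht0 ht1 heq with h | h
    · rw [h]; exact hvT
    · rw [h]; exact hwT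
  · exact absurd (hveq.trans hweq.symm) hvw
end

section
/- Let Δ' ⊂ ℝ³ be the convex hull of the six points (−1,2,−1), (−1,−1,1), (−1,−1,−1), (6,−1,−1), (2,1,−1), (0,−1,1). Then Δ' contains the origin in its interior and its polar dual (Δ')* equals the convex hull of the six integer points (−1,−3,−4), (0,−2,−3), (0,1,0), (1,0,0), (0,0,1), (−1,−2,−3); in particular Δ' is a reflexive polytope. -/
private lemma memhull {n : ℕ} {s : Set (Fin 3 → ℝ)} (w : Fin n → Fin 3 → ℝ)
    (hw : ∀ i, w i ∈ s) (c : Fin n → ℝ) (hc : ∀ i, 0 ≤ c i) (h1 : ∑ i, c i = 1)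
    {y : Fin 3 → ℝ} (hy : y = ∑ i, c i • w i) : y ∈ convexHull ℝ s := by
  rw [hy]
  exact (convex_convexHull ℝ s).sum_mem (fun i _ => hc i) h1
    (fun i _ => subset_convexHull ℝ s (hw i))

private lemma halfConvex (w : Fin 3 → ℝ) :
    Convex ℝ {x : Fin 3 → ℝ | -1 ≤ ∑ i, w i * x i} := by
  intro p hp q hq a b ha hb hab
  simp only [Set.mem_setOf_eq] at *
  have e : ∑ i, w i * (a • p + b • q) i = a * ∑ i, w i * p i + b * ∑ i, w i * q i := by
    simp [Fin.sum_univ_three]; ring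
  rw [e]; nlinarith [hp, hq]

private lemma hWmem : ∀ i, ![![-1,-3,-4], ![0,-2,-3], ![0,1,0], ![1,0,0], ![0,0,1], ![-1,-2,-3]] i ∈ ({![-1,-3,-4], ![0,-2,-3], ![0,1,0], ![1,0,0], ![0,0,1], ![-1,-2,-3]} : Set (Fin 3 → ℝ)) := by
  intro i; fin_cases i
  · exact (Set.mem_insert _ _)
  · exact (Set.mem_insert_of_mem _ (Set.mem_insert _ _))
  · exact (Set.mem_insert_of_mem _ (Set.mem_insert_of_mem _ (Set.mem_insert _ _)))
  · exact (Set.mem_insert_of_mem _ (Set.mem_insert_of_mem _ (Set.mem_insert_of_mem _ (Set.mem_insert _ _))))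
  · exact (Set.mem_insert_of_mem _ (Set.mem_insert_of_mem _ (Set.mem_insert_of_mem _ (Set.mem_insert_of_mem _ (Set.mem_insert _ _)))))
  · exact (Set.mem_insert_of_mem _ (Set.mem_insert_of_mem _ (Set.mem_insert_of_mem _ (Set.mem_insert_of_mem _ (Set.mem_insert_of_mem _ (Set.mem_singleton _))))))

private lemma hVmem : ∀ i, ![![-1,2,-1], ![-1,-1,1], ![-1,-1,-1], ![6,-1,-1], ![2,1,-1], ![0,-1,1]] i ∈ ({![-1,2,-1], ![-1,-1,1], ![-1,-1,-1], ![6,-1,-1], ![2,1,-1], ![0,-1,1]} : Set (Fin 3 → ℝ)) := by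
  intro i; fin_cases i
  · exact (Set.mem_insert _ _)
  · exact (Set.mem_insert_of_mem _ (Set.mem_insert _ _))
  · exact (Set.mem_insert_of_mem _ (Set.mem_insert_of_mem _ (Set.mem_insert _ _)))
  · exact (Set.mem_insert_of_mem _ (Set.mem_insert_of_mem _ (Set.mem_insert_of_mem _ (Set.mem_insert _ _))))
  · exact (Set.mem_insert_of_mem _ (Set.mem_insert_of_mem _ (Set.mem_insert_of_mem _ (Set.mem_insert_of_mem _ (Set.mem_insert _ _)))))
  · exact (Set.mem_insert_of_mem _ (Set.mem_insert_of_mem _ (Set.mem_insert_of_mem _ (Set.mem_insert_of_mem _ (Set.mem_insert_of_mem _ (Set.mem_singleton _))))))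

private lemma tet1 (y : Fin 3 → ℝ)
    (h1 : 0 ≤ 6*y 0 - y 1 - y 2 + 1)
    (h2 : 0 ≤ -2*y 0 + 5*y 1 - 2*y 2 + 2)
    (h3 : 0 ≤ -3*y 0 - 3*y 1 + 4*y 2 + 3)
    (h4 : 0 ≤ -y 0 - y 1 - y 2 + 1)
    : y ∈ convexHull ℝ ({![-1,-3,-4], ![0,-2,-3], ![0,1,0], ![1,0,0], ![0,0,1], ![-1,-2,-3]} : Set (Fin 3 → ℝ)) := by
  refine memhull ![![-1,-3,-4], ![0,-2,-3], ![0,1,0], ![1,0,0], ![0,0,1], ![-1,-2,-3]] hWmem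
    ![(0:ℝ), (0:ℝ), (-2*y 0 + 5*y 1 - 2*y 2 + 2)/7, (6*y 0 - y 1 - y 2 + 1)/7, (-3*y 0 - 3*y 1 + 4*y 2 + 3)/7, (-y 0 - y 1 - y 2 + 1)/7] ?_ ?_ ?_
  · intro i; fin_cases i
    · exact le_refl (0:ℝ)
    · exact le_refl (0:ℝ)
    · show (0:ℝ) ≤ (-2*y 0 + 5*y 1 - 2*y 2 + 2)/7
      linarith
    · show (0:ℝ) ≤ (6*y 0 - y 1 - y 2 + 1)/7
      linarith
    · show (0:ℝ) ≤ (-3*y 0 - 3*y 1 + 4*y 2 + 3)/7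
      linarith
    · show (0:ℝ) ≤ (-y 0 - y 1 - y 2 + 1)/7
      linarith
  · simp [Fin.sum_univ_succ, Matrix.cons_val_succ]; ring
  · funext j; fin_cases j <;> simp [Fin.sum_univ_succ, Matrix.cons_val_succ] <;> ring

private lemma tet2 (y : Fin 3 → ℝ)
    (h1 : 0 ≤ 2*y 0 + y 1 - y 2 + 1)
    (h2 : 0 ≤ 2*y 0 - 5*y 1 + 2*y 2 - 2)
    (h3 : 0 ≤ -y 0 - 2*y 1 + 2*y 2 + 1)
    (h4 : 0 ≤ -y 0 + 2*y 1 - y 2 + 1)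
    : y ∈ convexHull ℝ ({![-1,-3,-4], ![0,-2,-3], ![0,1,0], ![1,0,0], ![0,0,1], ![-1,-2,-3]} : Set (Fin 3 → ℝ)) := by
  refine memhull ![![-1,-3,-4], ![0,-2,-3], ![0,1,0], ![1,0,0], ![0,0,1], ![-1,-2,-3]] hWmem
    ![(2*y 0 - 5*y 1 + 2*y 2 - 2)/3, (0:ℝ), (0:ℝ), (2*y 0 + y 1 - y 2 + 1)/3, (-y 0 - 2*y 1 + 2*y 2 + 1)/3, -y 0 + 2*y 1 - y 2 + 1] ?_ ?_ ?_
  · intro i; fin_cases i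
    · show (0:ℝ) ≤ (2*y 0 - 5*y 1 + 2*y 2 - 2)/3
      linarith
    · exact le_refl (0:ℝ)
    · exact le_refl (0:ℝ)
    · show (0:ℝ) ≤ (2*y 0 + y 1 - y 2 + 1)/3
      linarith
    · show (0:ℝ) ≤ (-y 0 - 2*y 1 + 2*y 2 + 1)/3
      linarith
    · show (0:ℝ) ≤ -y 0 + 2*y 1 - y 2 + 1
      linarith
  · simp [Fin.sum_univ_succ, Matrix.cons_val_succ]; ring
  · funext j; fin_cases j <;> simp [Fin.sum_univ_succ, Matrix.cons_val_succ] <;> ring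

private lemma tet3 (y : Fin 3 → ℝ)
    (h1 : 0 ≤ -y 1 + y 2 + 1)
    (h2 : 0 ≤ -y 0 - y 1 + y 2 + 1)
    (h3 : 0 ≤ 4*y 0 + 4*y 1 - 5*y 2 - 4)
    (h4 : 0 ≤ -y 0 + 2*y 1 - y 2 + 1)
    : y ∈ convexHull ℝ ({![-1,-3,-4], ![0,-2,-3], ![0,1,0], ![1,0,0], ![0,0,1], ![-1,-2,-3]} : Set (Fin 3 → ℝ)) := by
  refine memhull ![![-1,-3,-4], ![0,-2,-3], ![0,1,0], ![1,0,0], ![0,0,1], ![-1,-2,-3]] hWmem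
    ![-y 0 - y 1 + y 2 + 1, (4*y 0 + 4*y 1 - 5*y 2 - 4)/3, (-y 0 + 2*y 1 - y 2 + 1)/3, -y 1 + y 2 + 1, (0:ℝ), (0:ℝ)] ?_ ?_ ?_
  · intro i; fin_cases i
    · show (0:ℝ) ≤ -y 0 - y 1 + y 2 + 1
      linarith
    · show (0:ℝ) ≤ (4*y 0 + 4*y 1 - 5*y 2 - 4)/3
      linarith
    · show (0:ℝ) ≤ (-y 0 + 2*y 1 - y 2 + 1)/3
      linarith
    · show (0:ℝ) ≤ -y 1 + y 2 + 1
      linarith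
    · exact le_refl (0:ℝ)
    · exact le_refl (0:ℝ)
  · simp [Fin.sum_univ_succ, Matrix.cons_val_succ]; ring
  · funext j; fin_cases j <;> simp [Fin.sum_univ_succ, Matrix.cons_val_succ] <;> ring

private lemma tet4 (y : Fin 3 → ℝ)
    (h1 : 0 ≤ -y 1 + y 2 + 1)
    (h2 : 0 ≤ 3*y 0 + 3*y 1 - 4*y 2 - 3)
    (h3 : 0 ≤ y 0 + 2*y 1 - 2*y 2 - 1)
    (h4 : 0 ≤ -4*y 0 - 4*y 1 + 5*y 2 + 4)
    : y ∈ convexHull ℝ ({![-1,-3,-4], ![0,-2,-3], ![0,1,0], ![1,0,0], ![0,0,1], ![-1,-2,-3]} : Set (Fin 3 → ℝ)) := by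
  refine memhull ![![-1,-3,-4], ![0,-2,-3], ![0,1,0], ![1,0,0], ![0,0,1], ![-1,-2,-3]] hWmem
    ![3*y 0 + 3*y 1 - 4*y 2 - 3, (0:ℝ), y 0 + 2*y 1 - 2*y 2 - 1, -y 1 + y 2 + 1, (0:ℝ), -4*y 0 - 4*y 1 + 5*y 2 + 4] ?_ ?_ ?_
  · intro i; fin_cases i
    · show (0:ℝ) ≤ 3*y 0 + 3*y 1 - 4*y 2 - 3
      linarith
    · exact le_refl (0:ℝ)
    · show (0:ℝ) ≤ y 0 + 2*y 1 - 2*y 2 - 1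
      linarith
    · show (0:ℝ) ≤ -y 1 + y 2 + 1
      linarith
    · exact le_refl (0:ℝ)
    · show (0:ℝ) ≤ -4*y 0 - 4*y 1 + 5*y 2 + 4
      linarith
  · simp [Fin.sum_univ_succ, Matrix.cons_val_succ]; ring
  · funext j; fin_cases j <;> simp [Fin.sum_univ_succ, Matrix.cons_val_succ] <;> ring

/-- The polytope Δ' contains the origin in its interior and its polar dual
is the convex hull of the listed integer points; in particular Δ' is reflexive. -/
theorem stmt_10 :
    let Δ' : Set (Fin 3 → ℝ) := convexHull ℝ ({![-1,2,-1], ![-1,-1,1], ![-1,-1,-1], ![6,-1,-1], ![2,1,-1], ![0,-1,1]} : Set (Fin 3 → ℝ))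
    (0 : Fin 3 → ℝ) ∈ interior Δ' ∧
    {y : Fin 3 → ℝ | ∀ x ∈ Δ', -1 ≤ ∑ i, y i * x i} =
      convexHull ℝ ({![-1,-3,-4], ![0,-2,-3], ![0,1,0], ![1,0,0], ![0,0,1], ![-1,-2,-3]} : Set (Fin 3 → ℝ)) := by
  intro Δ'
  constructor
  · -- interior
    rw [mem_interior]
    refine ⟨(fun x : Fin 3 → ℝ => x 0) ⁻¹' Set.Ioo (-(1/42 : ℝ)) (1/42) ∩
      ((fun x : Fin 3 → ℝ => x 1) ⁻¹' Set.Ioo (-(1/42 : ℝ)) (1/42) ∩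
       (fun x : Fin 3 → ℝ => x 2) ⁻¹' Set.Ioo (-(1/42 : ℝ)) (1/42)), ?_, ?_, ?_⟩
    · rintro x ⟨hx0, hx1, hx2⟩
      obtain ⟨g1, g2⟩ := hx0
      obtain ⟨g3, g4⟩ := hx1
      obtain ⟨g5, g6⟩ := hx2
      refine memhull ![![-1,2,-1], ![-1,-1,1], ![-1,-1,-1], ![6,-1,-1], ![2,1,-1], ![0,-1,1]] hVmem
        ![x 1/3 + 1/3, x 2/2 + 1/2, -x 0/7 - x 1/3 - x 2/2 + 1/42, x 0/7 + 1/7, 0, 0] ?_ ?_ ?_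
      · intro i; fin_cases i
        · show (0:ℝ) ≤ x 1/3 + 1/3
          linarith
        · show (0:ℝ) ≤ x 2/2 + 1/2
          linarith
        · show (0:ℝ) ≤ -x 0/7 - x 1/3 - x 2/2 + 1/42
          linarith
        · show (0:ℝ) ≤ x 0/7 + 1/7
          linarith
        · exact le_refl (0:ℝ)
        · exact le_refl (0:ℝ)
      · simp [Fin.sum_univ_succ, Matrix.cons_val_succ]; ring
      · funext j; fin_cases j <;> simp [Fin.sum_univ_succ, Matrix.cons_val_succ] <;> ring
    · exact (isOpen_Ioo.preimage (continuous_apply 0)).inter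
        ((isOpen_Ioo.preimage (continuous_apply 1)).inter
         (isOpen_Ioo.preimage (continuous_apply 2)))
    · refine ⟨?_, ?_, ?_⟩ <;> norm_num
  · -- polar dual
    apply Set.Subset.antisymm
    · intro y hy
      have k1 := hy ![(-1:ℝ),2,-1] (subset_convexHull ℝ _ (Set.mem_insert _ _))
      have k2 := hy ![(-1:ℝ),-1,1] (subset_convexHull ℝ _ (Set.mem_insert_of_mem _ (Set.mem_insert _ _)))
      have k3 := hy ![(-1:ℝ),-1,-1] (subset_convexHull ℝ _ (Set.mem_insert_of_mem _ (Set.mem_insert_of_mem _ (Set.mem_insert _ _))))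
      have k4 := hy ![(6:ℝ),-1,-1] (subset_convexHull ℝ _ (Set.mem_insert_of_mem _ (Set.mem_insert_of_mem _ (Set.mem_insert_of_mem _ (Set.mem_insert _ _)))))
      have k5 := hy ![(2:ℝ),1,-1] (subset_convexHull ℝ _ (Set.mem_insert_of_mem _ (Set.mem_insert_of_mem _ (Set.mem_insert_of_mem _ (Set.mem_insert_of_mem _ (Set.mem_insert _ _))))))
      have k6 := hy ![(0:ℝ),-1,1] (subset_convexHull ℝ _ (Set.mem_insert_of_mem _ (Set.mem_insert_of_mem _ (Set.mem_insert_of_mem _ (Set.mem_insert_of_mem _ (Set.mem_insert_of_mem _ (Set.mem_singleton _)))))))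
      simp only [Fin.sum_univ_three, Matrix.cons_val_zero, Matrix.cons_val_one,
        Matrix.head_cons, Matrix.cons_val_two, Matrix.tail_cons] at k1 k2 k3 k4 k5 k6
      rcases le_total (2*y 0 - 5*y 1 + 2*y 2) (2) with hq1 | hq1
      · -- s1 = -1
        rcases le_total (-3*y 0 - 3*y 1 + 4*y 2) (-3) with hq2 | hq2
        · -- s2 = -1
          rcases le_total (4*y 0 + 4*y 1 - 5*y 2) (4) with hq3 | hq3
          · -- s3 = -1
            rcases le_total (y 0 + 2*y 1 - 2*y 2) (1) with hq4 | hq4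
            · -- s4 = -1
              exact tet4 y (by linarith) (by linarith) (by linarith) (by linarith)
            · -- s4 = +1
              exact tet4 y (by linarith) (by linarith) (by linarith) (by linarith)
          · -- s3 = +1
            rcases le_total (y 0 + 2*y 1 - 2*y 2) (1) with hq4 | hq4
            · -- s4 = -1
              exact tet1 y (by linarith) (by linarith) (by linarith) (by linarith)
            · -- s4 = +1
              exact tet3 y (by linarith) (by linarith) (by linarith) (by linarith)
        · -- s2 = +1
          rcases le_total (4*y 0 + 4*y 1 - 5*y 2) (4) with hq3 | hq3
          · -- s3 = -1
            rcases le_total (y 0 + 2*y 1 - 2*y 2) (1) with hq4 | hq4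
            · -- s4 = -1
              exact tet1 y (by linarith) (by linarith) (by linarith) (by linarith)
            · -- s4 = +1
              exact tet1 y (by linarith) (by linarith) (by linarith) (by linarith)
          · -- s3 = +1
            rcases le_total (y 0 + 2*y 1 - 2*y 2) (1) with hq4 | hq4
            · -- s4 = -1
              exact tet1 y (by linarith) (by linarith) (by linarith) (by linarith)
            · -- s4 = +1
              exact tet1 y (by linarith) (by linarith) (by linarith) (by linarith)
      · -- s1 = +1
        rcases le_total (-3*y 0 - 3*y 1 + 4*y 2) (-3) with hq2 | hq2
        · -- s2 = -1
          rcases le_total (4*y 0 + 4*y 1 - 5*y 2) (4) with hq3 | hq3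
          · -- s3 = -1
            rcases le_total (y 0 + 2*y 1 - 2*y 2) (1) with hq4 | hq4
            · -- s4 = -1
              exact tet2 y (by linarith) (by linarith) (by linarith) (by linarith)
            · -- s4 = +1
              exact tet4 y (by linarith) (by linarith) (by linarith) (by linarith)
          · -- s3 = +1
            rcases le_total (y 0 + 2*y 1 - 2*y 2) (1) with hq4 | hq4
            · -- s4 = -1
              exact tet2 y (by linarith) (by linarith) (by linarith) (by linarith)
            · -- s4 = +1
              exact tet3 y (by linarith) (by linarith) (by linarith) (by linarith)
        · -- s2 = +1
          rcases le_total (4*y 0 + 4*y 1 - 5*y 2) (4) with hq3 | hq3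
          · -- s3 = -1
            rcases le_total (y 0 + 2*y 1 - 2*y 2) (1) with hq4 | hq4
            · -- s4 = -1
              exact tet2 y (by linarith) (by linarith) (by linarith) (by linarith)
            · -- s4 = +1
              exact tet1 y (by linarith) (by linarith) (by linarith) (by linarith)
          · -- s3 = +1
            rcases le_total (y 0 + 2*y 1 - 2*y 2) (1) with hq4 | hq4
            · -- s4 = -1
              exact tet1 y (by linarith) (by linarith) (by linarith) (by linarith)
            · -- s4 = +1
              exact tet1 y (by linarith) (by linarith) (by linarith) (by linarith)
    · refine convexHull_min ?_ ?_
      · intro w hw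
        simp only [Set.mem_insert_iff, Set.mem_singleton_iff] at hw
        rcases hw with rfl | rfl | rfl | rfl | rfl | rfl <;>
        · intro x hx
          refine convexHull_min ?_ (halfConvex _) hx
          intro v hv
          simp only [Set.mem_insert_iff, Set.mem_singleton_iff] at hv
          rcases hv with rfl | rfl | rfl | rfl | rfl | rfl <;>
            norm_num [Fin.sum_univ_three, Matrix.cons_val_two, Matrix.tail_cons, Matrix.head_cons]
      · intro p hp q hq a b ha hb hab x hx
        have h1 := hp x hx
        have h2 := hq x hx
        have e : ∑ i, (a • p + b • q) i * x i
            = a * ∑ i, p i * x i + b * ∑ i, q i * x i := by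
          simp [Fin.sum_univ_three]; ring
        show -1 ≤ ∑ i, (a • p + b • q) i * x i
        rw [e]; nlinarith [h1, h2]
end

section
/- Let Δ' ⊂ ℝ³ be the convex hull of the five points (−1,−1,−1), (5,−1,−1), (1,3,−1), (−1,3,−1), (−1,−1,1). Then Δ' contains the origin in its interior and its polar dual (Δ')* equals the convex hull of the five integer points (0,1,0), (−1,−1,−3), (0,−1,−2), (1,0,0), (0,0,1); in particular Δ' is a reflexive polytope. -/
lemma mem_hull4 {s : Set (Fin 3 → ℝ)} {p1 p2 p3 p4 : Fin 3 → ℝ}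
    (h1 : p1 ∈ s) (h2 : p2 ∈ s) (h3 : p3 ∈ s) (h4 : p4 ∈ s)
    {a b c d : ℝ} (ha : 0 ≤ a) (hb : 0 ≤ b) (hc : 0 ≤ c) (hd : 0 ≤ d)
    (hsum : a + b + c + d = 1) :
    a • p1 + b • p2 + c • p3 + d • p4 ∈ convexHull ℝ s := by
  have h := (convex_convexHull ℝ s).sum_mem (t := (Finset.univ : Finset (Fin 4)))
    (w := ![a,b,c,d]) (z := ![p1,p2,p3,p4]) ?_ ?_ ?_
  · simpa [Fin.sum_univ_four] using h
  · intro i _; fin_cases i <;> assumption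
  · simp [Fin.sum_univ_four]; linarith
  · intro i _; fin_cases i <;> simp <;> exact subset_convexHull ℝ s ‹_›

lemma halfA (c : Fin 3 → ℝ) : Convex ℝ {x : Fin 3 → ℝ | -1 ≤ ∑ i, c i * x i} := by
  intro x hx y hy a b ha hb hab
  simp only [Set.mem_setOf_eq] at *
  have hsum : ∑ i, c i * (a • x + b • y) i
      = a * ∑ i, c i * x i + b * ∑ i, c i * y i := by
    simp [Fin.sum_univ_three]; ring
  rw [hsum]
  nlinarith [mul_le_mul_of_nonneg_left hx ha, mul_le_mul_of_nonneg_left hy hb]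

lemma halfB (c : Fin 3 → ℝ) : Convex ℝ {y : Fin 3 → ℝ | -1 ≤ ∑ i, y i * c i} := by
  intro x hx y hy a b ha hb hab
  simp only [Set.mem_setOf_eq] at *
  have hsum : ∑ i, (a • x + b • y) i * c i
      = a * ∑ i, x i * c i + b * ∑ i, y i * c i := by
    simp [Fin.sum_univ_three]; ring
  rw [hsum]
  nlinarith [mul_le_mul_of_nonneg_left hx ha, mul_le_mul_of_nonneg_left hy hb]

/-- The polytope Δ' contains the origin in its interior and its polar dual
is the convex hull of the listed integer points; in particular Δ' is reflexive. -/
theorem stmt_15 :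
    let Δ' : Set (Fin 3 → ℝ) := convexHull ℝ ({![-1,-1,-1], ![5,-1,-1], ![1,3,-1], ![-1,3,-1], ![-1,-1,1]} : Set (Fin 3 → ℝ))
    (0 : Fin 3 → ℝ) ∈ interior Δ' ∧
    {y : Fin 3 → ℝ | ∀ x ∈ Δ', -1 ≤ ∑ i, y i * x i} =
      convexHull ℝ ({![0,1,0], ![-1,-1,-3], ![0,-1,-2], ![1,0,0], ![0,0,1]} : Set (Fin 3 → ℝ)) := by
  intro Δ'
  have hv1 : (![-1,-1,-1] : Fin 3 → ℝ) ∈ Δ' := subset_convexHull ℝ _ (by simp)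
  have hv2 : (![5,-1,-1] : Fin 3 → ℝ) ∈ Δ' := subset_convexHull ℝ _ (by simp)
  have hv3 : (![1,3,-1] : Fin 3 → ℝ) ∈ Δ' := subset_convexHull ℝ _ (by simp)
  have hv4 : (![-1,3,-1] : Fin 3 → ℝ) ∈ Δ' := subset_convexHull ℝ _ (by simp)
  have hv5 : (![-1,-1,1] : Fin 3 → ℝ) ∈ Δ' := subset_convexHull ℝ _ (by simp)
  constructor
  · -- interior
    apply mem_interior.mpr
    refine ⟨Metric.ball 0 (1/12), ?_, Metric.isOpen_ball, Metric.mem_ball_self (by norm_num)⟩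
    intro p hp
    rw [mem_ball_zero_iff] at hp
    have b0 : |p 0| < 1/12 := lt_of_le_of_lt (by simpa using norm_le_pi_norm p 0) hp
    have b1 : |p 1| < 1/12 := lt_of_le_of_lt (by simpa using norm_le_pi_norm p 1) hp
    have b2 : |p 2| < 1/12 := lt_of_le_of_lt (by simpa using norm_le_pi_norm p 2) hp
    rw [abs_lt] at b0 b1 b2
    have key : p = ((1 - 2*p 0 - 3*p 1 - 6*p 2)/12) • (![-1,-1,-1] : Fin 3 → ℝ)
        + ((p 0 + 1)/6) • ![5,-1,-1] + ((p 1 + 1)/4) • ![-1,3,-1]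
        + ((p 2 + 1)/2) • ![-1,-1,1] := by
      funext i; fin_cases i <;>
        simp [Matrix.cons_val_zero, Matrix.cons_val_one, Matrix.head_cons] <;> ring
    rw [key]
    exact mem_hull4 (by simp) (by simp) (by simp) (by simp)
      (by linarith) (by linarith) (by linarith) (by linarith) (by ring)
  · -- polar dual
    ext y
    simp only [Set.mem_setOf_eq]
    constructor
    · intro hy
      have e1 := hy _ hv1
      have e2 := hy _ hv2
      have e3 := hy _ hv3
      have e4 := hy _ hv4
      have e5 := hy _ hv5
      simp only [Fin.sum_univ_three, Matrix.cons_val_zero, Matrix.cons_val_one,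
        Matrix.head_cons, Matrix.cons_val_two, Matrix.tail_cons] at e1 e2 e3 e4 e5
      rcases le_total (y 0) 0 with h | h
      · -- y ∈ hull{P1,P2,P3,P5}
        have key : y = ((y 0 + 3*y 1 - y 2 + 1)/4) • (![0,1,0] : Fin 3 → ℝ)
            + (-(y 0)) • ![-1,-1,-3] + ((5*y 0 - y 1 - y 2 + 1)/4) • ![0,-1,-2]
            + ((1 - y 0 - y 1 + y 2)/2) • ![0,0,1] := by
          funext i; fin_cases i <;>
            simp [Matrix.cons_val_zero, Matrix.cons_val_one, Matrix.head_cons] <;> ring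
        rw [key]
        exact mem_hull4 (by simp) (by simp) (by simp) (by simp)
          (by linarith) (by linarith) (by linarith) (by linarith) (by ring)
      · -- y ∈ hull{P1,P3,P4,P5}
        have key : y = ((-(y 0) + 3*y 1 - y 2 + 1)/4) • (![0,1,0] : Fin 3 → ℝ)
            + ((1 - y 0 - y 1 - y 2)/4) • ![0,-1,-2] + (y 0) • ![1,0,0]
            + ((1 - y 0 - y 1 + y 2)/2) • ![0,0,1] := by
          funext i; fin_cases i <;>
            simp [Matrix.cons_val_zero, Matrix.cons_val_one, Matrix.head_cons] <;> ring
        rw [key]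
        exact mem_hull4 (by simp) (by simp) (by simp) (by simp)
          (by linarith) (by linarith) (by linarith) (by linarith) (by ring)
    · intro hy
      have hsub : ({![0,1,0], ![-1,-1,-3], ![0,-1,-2], ![1,0,0], ![0,0,1]} : Set (Fin 3 → ℝ))
          ⊆ {y : Fin 3 → ℝ | ∀ x ∈ Δ', -1 ≤ ∑ i, y i * x i} := by
        rintro z (rfl | rfl | rfl | rfl | rfl) <;>
        · refine convexHull_min ?_ (halfA _)
          rintro x (rfl | rfl | rfl | rfl | rfl) <;>
          · show (-1 : ℝ) ≤ _
            norm_num [Fin.sum_univ_three, Matrix.cons_val_two, Matrix.tail_cons, Matrix.head_cons]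
      have hconv : Convex ℝ {y : Fin 3 → ℝ | ∀ x ∈ Δ', -1 ≤ ∑ i, y i * x i} := by
        have : {y : Fin 3 → ℝ | ∀ x ∈ Δ', -1 ≤ ∑ i, y i * x i}
            = ⋂ x ∈ Δ', {y : Fin 3 → ℝ | -1 ≤ ∑ i, y i * x i} := by
          ext y; simp [Set.mem_iInter]
        rw [this]
        exact convex_iInter₂ fun x _ => halfB x
      exact convexHull_min hsub hconv hy
end

section
/- Let Δ ⊂ ℝ³ be the convex hull of (−1,0,1), (−1,0,0), (1,2,−1), (2,3,−1), (0,−1,0) (a reflexive polytope). For every edge Γ of Δ, at least one of the following holds: the only points of ℤ³ on Γ are its two endpoints, or the only points of ℤ³ on the dual edge Γ* = {y ∈ Δ* : ⟨y, x⟩ = −1 for all x ∈ Γ} are its two endpoints. (Equivalently, l*(Γ)·l*(Γ*) = 0 for all edges Γ, so the sum Σ_Γ l*(Γ) l*(Γ*) over all edges of Δ vanishes.) -/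
private lemma my_extreme_mono {A B : Set (Fin 3 → ℝ)} (hAB : A ⊆ B) {v : Fin 3 → ℝ}
    (hvA : v ∈ A) (h : v ∈ Set.extremePoints ℝ B) : v ∈ Set.extremePoints ℝ A :=
  ⟨hvA, fun x1 hx1 x2 hx2 hs => h.2 (hAB hx1) (hAB hx2) hs⟩

private lemma my_extreme_of_tight {A : Set (Fin 3 → ℝ)} {v : Fin 3 → ℝ}
    (f g h : (Fin 3 → ℝ) → ℝ)
    (hf : ∀ a b : ℝ, ∀ x y : Fin 3 → ℝ, f (a • x + b • y) = a * f x + b * f y)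
    (hg : ∀ a b : ℝ, ∀ x y : Fin 3 → ℝ, g (a • x + b • y) = a * g x + b * g y)
    (hh : ∀ a b : ℝ, ∀ x y : Fin 3 → ℝ, h (a • x + b • y) = a * h x + b * h y)
    (hv : v ∈ A)
    (h1 : ∀ x ∈ A, -1 ≤ f x) (h2 : ∀ x ∈ A, -1 ≤ g x) (h3 : ∀ x ∈ A, -1 ≤ h x)
    (t1 : f v = -1) (t2 : g v = -1) (t3 : h v = -1)
    (uniq : ∀ x : Fin 3 → ℝ, f x = -1 → g x = -1 → h x = -1 → x = v) :
    v ∈ Set.extremePoints ℝ A := by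
  refine ⟨hv, ?_⟩
  intro x1 hx1 x2 hx2 hs
  obtain ⟨a, b, ha, hb, hab, hsum⟩ := hs
  have key : ∀ F : (Fin 3 → ℝ) → ℝ,
      (∀ a b : ℝ, ∀ x y : Fin 3 → ℝ, F (a • x + b • y) = a * F x + b * F y) →
      (∀ x ∈ A, -1 ≤ F x) → F v = -1 → F x1 = -1 ∧ F x2 = -1 := by
    intro F hF hFA ht
    have e : a * F x1 + b * F x2 = -1 := by rw [← hF a b x1 x2, hsum, ht]
    have hc1 := hFA x1 hx1
    have hc2 := hFA x2 hx2
    have e1 : a * F x1 = a * (-1) := by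
      nlinarith [mul_le_mul_of_nonneg_left hc1 ha.le, mul_le_mul_of_nonneg_left hc2 hb.le]
    have e2 : b * F x2 = b * (-1) := by
      nlinarith [mul_le_mul_of_nonneg_left hc1 ha.le, mul_le_mul_of_nonneg_left hc2 hb.le]
    exact ⟨mul_left_cancel₀ ha.ne' e1, mul_left_cancel₀ hb.ne' e2⟩
  obtain ⟨a1, a2⟩ := key f hf h1 t1
  obtain ⟨b1, b2⟩ := key g hg h2 t2
  obtain ⟨d1, d2⟩ := key h hh h3 t3
  exact uniq x1 a1 b1 d1

private def Hset : Set (Fin 3 → ℝ) :=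
  {x | -1 ≤ -x 0 + x 1 + 2*x 2 ∧ -1 ≤ x 0 + x 1 ∧ -1 ≤ -5*x 0 + x 1 - 6*x 2 ∧
       -1 ≤ x 0 - x 1 ∧ -1 ≤ x 0 + x 1 + 4*x 2}

private lemma my_hull_sub :
    convexHull ℝ ({![-1,0,1], ![-1,0,0], ![1,2,-1], ![2,3,-1], ![0,-1,0]} : Set (Fin 3 → ℝ))
      ⊆ Hset := by
  apply convexHull_min
  · intro x hx
    simp only [Set.mem_insert_iff, Set.mem_singleton_iff] at hx
    rcases hx with rfl | rfl | rfl | rfl | rfl <;> norm_num [Hset, Matrix.cons_val_two]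
  · intro x hx y hy a b ha hb hab
    obtain ⟨hx1, hx2, hx3, hx4, hx5⟩ := hx
    obtain ⟨hy1, hy2, hy3, hy4, hy5⟩ := hy
    refine ⟨?_, ?_, ?_, ?_, ?_⟩ <;>
      simp only [Pi.add_apply, Pi.smul_apply, smul_eq_mul] <;>
      nlinarith [mul_le_mul_of_nonneg_left hx1 ha, mul_le_mul_of_nonneg_left hy1 hb,
        mul_le_mul_of_nonneg_left hx2 ha, mul_le_mul_of_nonneg_left hy2 hb,
        mul_le_mul_of_nonneg_left hx3 ha, mul_le_mul_of_nonneg_left hy3 hb,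
        mul_le_mul_of_nonneg_left hx4 ha, mul_le_mul_of_nonneg_left hy4 hb,
        mul_le_mul_of_nonneg_left hx5 ha, mul_le_mul_of_nonneg_left hy5 hb]

private lemma my_extA : ![-1,0,1] ∈ Set.extremePoints ℝ Hset := by
  apply my_extreme_of_tight (fun x => x 0 + x 1) (fun x => -5*x 0 + x 1 - 6*x 2)
    (fun x => x 0 - x 1)
  case hf => intro a b x y; simp only [Pi.add_apply, Pi.smul_apply, smul_eq_mul]; ring
  case hg => intro a b x y; simp only [Pi.add_apply, Pi.smul_apply, smul_eq_mul]; ring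
  case hh => intro a b x y; simp only [Pi.add_apply, Pi.smul_apply, smul_eq_mul]; ring
  case hv => norm_num [Hset, Matrix.cons_val_two]
  case h1 => exact fun x hx => hx.2.1
  case h2 => exact fun x hx => hx.2.2.1
  case h3 => exact fun x hx => hx.2.2.2.1
  case t1 => norm_num
  case t2 => norm_num [Matrix.cons_val_two]
  case t3 => norm_num
  case uniq =>
    intro x e1 e2 e3
    funext i; fin_cases i <;> simp <;> linarith

private lemma my_extB : ![-1,0,0] ∈ Set.extremePoints ℝ Hset := by
  apply my_extreme_of_tight (fun x => x 0 + x 1) (fun x => x 0 - x 1)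
    (fun x => x 0 + x 1 + 4*x 2)
  case hf => intro a b x y; simp only [Pi.add_apply, Pi.smul_apply, smul_eq_mul]; ring
  case hg => intro a b x y; simp only [Pi.add_apply, Pi.smul_apply, smul_eq_mul]; ring
  case hh => intro a b x y; simp only [Pi.add_apply, Pi.smul_apply, smul_eq_mul]; ring
  case hv => norm_num [Hset, Matrix.cons_val_two]
  case h1 => exact fun x hx => hx.2.1
  case h2 => exact fun x hx => hx.2.2.2.1
  case h3 => exact fun x hx => hx.2.2.2.2
  case t1 => norm_num
  case t2 => norm_num
  case t3 => norm_num [Matrix.cons_val_two]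
  case uniq =>
    intro x e1 e2 e3
    funext i; fin_cases i <;> simp <;> linarith

private lemma my_extC : ![1,2,-1] ∈ Set.extremePoints ℝ Hset := by
  apply my_extreme_of_tight (fun x => -x 0 + x 1 + 2*x 2) (fun x => x 0 - x 1)
    (fun x => x 0 + x 1 + 4*x 2)
  case hf => intro a b x y; simp only [Pi.add_apply, Pi.smul_apply, smul_eq_mul]; ring
  case hg => intro a b x y; simp only [Pi.add_apply, Pi.smul_apply, smul_eq_mul]; ring
  case hh => intro a b x y; simp only [Pi.add_apply, Pi.smul_apply, smul_eq_mul]; ring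
  case hv => norm_num [Hset, Matrix.cons_val_two]
  case h1 => exact fun x hx => hx.1
  case h2 => exact fun x hx => hx.2.2.2.1
  case h3 => exact fun x hx => hx.2.2.2.2
  case t1 => norm_num [Matrix.cons_val_two]
  case t2 => norm_num
  case t3 => norm_num [Matrix.cons_val_two]
  case uniq =>
    intro x e1 e2 e3
    funext i; fin_cases i <;> simp <;> linarith

private lemma my_extD : ![2,3,-1] ∈ Set.extremePoints ℝ Hset := by
  apply my_extreme_of_tight (fun x => -x 0 + x 1 + 2*x 2) (fun x => -5*x 0 + x 1 - 6*x 2)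
    (fun x => x 0 - x 1)
  case hf => intro a b x y; simp only [Pi.add_apply, Pi.smul_apply, smul_eq_mul]; ring
  case hg => intro a b x y; simp only [Pi.add_apply, Pi.smul_apply, smul_eq_mul]; ring
  case hh => intro a b x y; simp only [Pi.add_apply, Pi.smul_apply, smul_eq_mul]; ring
  case hv => norm_num [Hset, Matrix.cons_val_two]
  case h1 => exact fun x hx => hx.1
  case h2 => exact fun x hx => hx.2.2.1
  case h3 => exact fun x hx => hx.2.2.2.1
  case t1 => norm_num [Matrix.cons_val_two]
  case t2 => norm_num [Matrix.cons_val_two]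
  case t3 => norm_num
  case uniq =>
    intro x e1 e2 e3
    funext i; fin_cases i <;> simp <;> linarith

private lemma my_extE : ![0,-1,0] ∈ Set.extremePoints ℝ Hset := by
  apply my_extreme_of_tight (fun x => -x 0 + x 1 + 2*x 2) (fun x => x 0 + x 1)
    (fun x => -5*x 0 + x 1 - 6*x 2)
  case hf => intro a b x y; simp only [Pi.add_apply, Pi.smul_apply, smul_eq_mul]; ring
  case hg => intro a b x y; simp only [Pi.add_apply, Pi.smul_apply, smul_eq_mul]; ring
  case hh => intro a b x y; simp only [Pi.add_apply, Pi.smul_apply, smul_eq_mul]; ring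
  case hv => norm_num [Hset, Matrix.cons_val_two]
  case h1 => exact fun x hx => hx.1
  case h2 => exact fun x hx => hx.2.1
  case h3 => exact fun x hx => hx.2.2.1
  case t1 => norm_num [Matrix.cons_val_two]
  case t2 => norm_num
  case t3 => norm_num [Matrix.cons_val_two]
  case uniq =>
    intro x e1 e2 e3
    funext i; fin_cases i <;> simp <;> linarith

private def Dset : Set (Fin 3 → ℝ) :=
  {y | -1 ≤ -y 0 + y 2 ∧ -1 ≤ -y 0 ∧ -1 ≤ y 0 + 2*y 1 - y 2 ∧
       -1 ≤ 2*y 0 + 3*y 1 - y 2 ∧ -1 ≤ -y 1}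

private lemma my_extU : ![1,-1,0] ∈ Set.extremePoints ℝ Dset := by
  apply my_extreme_of_tight (fun y => -y 0 + y 2) (fun y => -y 0)
    (fun y => y 0 + 2*y 1 - y 2)
  case hf => intro a b x y; simp only [Pi.add_apply, Pi.smul_apply, smul_eq_mul]; ring
  case hg => intro a b x y; simp only [Pi.add_apply, Pi.smul_apply, smul_eq_mul]; ring
  case hh => intro a b x y; simp only [Pi.add_apply, Pi.smul_apply, smul_eq_mul]; ring
  case hv => norm_num [Dset, Matrix.cons_val_two]
  case h1 => exact fun x hx => hx.1
  case h2 => exact fun x hx => hx.2.1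
  case h3 => exact fun x hx => hx.2.2.1
  case t1 => norm_num [Matrix.cons_val_two]
  case t2 => norm_num
  case t3 => norm_num [Matrix.cons_val_two]
  case uniq =>
    intro x e1 e2 e3
    funext i; fin_cases i <;> simp <;> linarith

/-- For every edge Γ of the reflexive polytope Δ, either Γ has no interior
lattice points or its dual edge Γ* has none: every lattice point on Γ
(resp. on Γ*) is an extreme point, i.e. an endpoint. -/
theorem stmt_19 :
    let Δ : Set (Fin 3 → ℝ) := convexHull ℝ ({![-1,0,1], ![-1,0,0], ![1,2,-1], ![2,3,-1], ![0,-1,0]} : Set (Fin 3 → ℝ))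
    let dual : Set (Fin 3 → ℝ) := {y | ∀ x ∈ Δ, -1 ≤ ∑ i, y i * x i}
    ∀ Γ : Set (Fin 3 → ℝ), IsExposed ℝ Δ Γ →
      Module.finrank ℝ (vectorSpan ℝ Γ) = 1 →
      (∀ p : Fin 3 → ℤ, (fun i => (p i : ℝ)) ∈ Γ →
          (fun i => (p i : ℝ)) ∈ Set.extremePoints ℝ Γ) ∨
      (∀ p : Fin 3 → ℤ,
          (fun i => (p i : ℝ)) ∈ {y ∈ dual | ∀ x ∈ Γ, ∑ i, y i * x i = -1} →
          (fun i => (p i : ℝ)) ∈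
            Set.extremePoints ℝ {y ∈ dual | ∀ x ∈ Γ, ∑ i, y i * x i = -1}) := by
  intro Δ dual Γ hexp _hrank
  have hΓΔ : Γ ⊆ Δ := hexp.subset
  have hΓH : Γ ⊆ Hset := fun x hx => my_hull_sub (hΓΔ hx)
  have memA : (![-1,0,1] : Fin 3 → ℝ) ∈ Δ := subset_convexHull ℝ _ (by norm_num)
  have memB : (![-1,0,0] : Fin 3 → ℝ) ∈ Δ := subset_convexHull ℝ _ (by norm_num)
  have memC : (![1,2,-1] : Fin 3 → ℝ) ∈ Δ := subset_convexHull ℝ _ (by norm_num)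
  have memD : (![2,3,-1] : Fin 3 → ℝ) ∈ Δ := subset_convexHull ℝ _ (by norm_num)
  have memE : (![0,-1,0] : Fin 3 → ℝ) ∈ Δ := subset_convexHull ℝ _ (by norm_num)
  have hsubD : ∀ y ∈ dual, y ∈ Dset := by
    intro y hy
    have eA := hy _ memA
    have eB := hy _ memB
    have eC := hy _ memC
    have eD := hy _ memD
    have eE := hy _ memE
    rw [Fin.sum_univ_three] at eA eB eC eD eE
    norm_num [Matrix.cons_val_two] at eA eB eC eD eE
    refine ⟨by linarith, by linarith, by linarith, by linarith, by linarith⟩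
  by_cases hz : (0 : Fin 3 → ℝ) ∈ Γ
  · right
    intro p hp
    have h0 := hp.2 (0 : Fin 3 → ℝ) hz
    norm_num at h0
  by_cases hq : (![0,1,0] : Fin 3 → ℝ) ∈ Γ
  · -- Γ is the edge through (0,1,0); its dual edge has lattice points only (1,-1,0)
    right
    intro p hp
    have hD := hsubD _ hp.1
    obtain ⟨eA, eB, eC, eD, eE⟩ := hD
    have heq := hp.2 ![0,1,0] hq
    rw [Fin.sum_univ_three] at heq
    norm_num [Matrix.cons_val_two] at heq
    have eA' : (-1:ℝ) ≤ -(p 0:ℝ) + (p 2:ℝ) := eA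
    have eB' : (-1:ℝ) ≤ -(p 0:ℝ) := eB
    have eC' : (-1:ℝ) ≤ (p 0:ℝ) + 2*(p 1:ℝ) - (p 2:ℝ) := eC
    have eD' : (-1:ℝ) ≤ 2*(p 0:ℝ) + 3*(p 1:ℝ) - (p 2:ℝ) := eD
    have heq' : (p 1:ℝ) = -1 := heq
    have i1 : (-1:ℤ) ≤ -p 0 + p 2 := by exact_mod_cast eA'
    have i2 : (-1:ℤ) ≤ -p 0 := by exact_mod_cast eB'
    have i3 : (-1:ℤ) ≤ p 0 + 2*p 1 - p 2 := by exact_mod_cast eC'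
    have i4 : (-1:ℤ) ≤ 2*p 0 + 3*p 1 - p 2 := by exact_mod_cast eD'
    have i5 : p 1 = -1 := by exact_mod_cast heq'
    have hval : p 0 = 1 ∧ p 1 = -1 ∧ p 2 = 0 := by omega
    have hPv : (fun i => (p i : ℝ)) = ![1,-1,0] := by
      funext i; fin_cases i <;> simp [hval.1, hval.2.1, hval.2.2]
    rw [hPv] at hp ⊢
    exact my_extreme_mono (fun y hy => hsubD y hy.1) hp my_extU
  · -- no non-vertex lattice point lies on Γ: every lattice point of Γ is a vertex
    left
    intro p hp
    have hPH := hΓH hp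
    have g1 : (-1:ℝ) ≤ -(p 0 : ℝ) + p 1 + 2*p 2 := hPH.1
    have g2 : (-1:ℝ) ≤ (p 0 : ℝ) + p 1 := hPH.2.1
    have g3 : (-1:ℝ) ≤ -5*(p 0 : ℝ) + p 1 - 6*p 2 := hPH.2.2.1
    have g4 : (-1:ℝ) ≤ (p 0 : ℝ) - p 1 := hPH.2.2.2.1
    have g5 : (-1:ℝ) ≤ (p 0 : ℝ) + p 1 + 4*p 2 := hPH.2.2.2.2
    have i1 : (-1:ℤ) ≤ -p 0 + p 1 + 2*p 2 := by exact_mod_cast g1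
    have i2 : (-1:ℤ) ≤ p 0 + p 1 := by exact_mod_cast g2
    have i3 : (-1:ℤ) ≤ -5*p 0 + p 1 - 6*p 2 := by exact_mod_cast g3
    have i4 : (-1:ℤ) ≤ p 0 - p 1 := by exact_mod_cast g4
    have i5 : (-1:ℤ) ≤ p 0 + p 1 + 4*p 2 := by exact_mod_cast g5
    have hcases : (p 0 = -1 ∧ p 1 = 0 ∧ p 2 = 1) ∨ (p 0 = -1 ∧ p 1 = 0 ∧ p 2 = 0) ∨
        (p 0 = 1 ∧ p 1 = 2 ∧ p 2 = -1) ∨ (p 0 = 2 ∧ p 1 = 3 ∧ p 2 = -1) ∨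
        (p 0 = 0 ∧ p 1 = -1 ∧ p 2 = 0) ∨ (p 0 = 0 ∧ p 1 = 0 ∧ p 2 = 0) ∨
        (p 0 = 0 ∧ p 1 = 1 ∧ p 2 = 0) := by omega
    rcases hcases with h | h | h | h | h | h | h
    · have hPv : (fun i => (p i : ℝ)) = ![-1,0,1] := by
        funext i; fin_cases i <;> simp [h.1, h.2.1, h.2.2]
      rw [hPv] at hp ⊢
      exact my_extreme_mono hΓH hp my_extA
    · have hPv : (fun i => (p i : ℝ)) = ![-1,0,0] := by
        funext i; fin_cases i <;> simp [h.1, h.2.1, h.2.2]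
      rw [hPv] at hp ⊢
      exact my_extreme_mono hΓH hp my_extB
    · have hPv : (fun i => (p i : ℝ)) = ![1,2,-1] := by
        funext i; fin_cases i <;> simp [h.1, h.2.1, h.2.2]
      rw [hPv] at hp ⊢
      exact my_extreme_mono hΓH hp my_extC
    · have hPv : (fun i => (p i : ℝ)) = ![2,3,-1] := by
        funext i; fin_cases i <;> simp [h.1, h.2.1, h.2.2]
      rw [hPv] at hp ⊢
      exact my_extreme_mono hΓH hp my_extD
    · have hPv : (fun i => (p i : ℝ)) = ![0,-1,0] := by
        funext i; fin_cases i <;> simp [h.1, h.2.1, h.2.2]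
      rw [hPv] at hp ⊢
      exact my_extreme_mono hΓH hp my_extE
    · exfalso
      apply hz
      have hPv : (fun i => (p i : ℝ)) = (0 : Fin 3 → ℝ) := by
        funext i; fin_cases i <;> simp [h.1, h.2.1, h.2.2]
      exact hPv ▸ hp
    · exfalso
      apply hq
      have hPv : (fun i => (p i : ℝ)) = ![0,1,0] := by
        funext i; fin_cases i <;> simp [h.1, h.2.1, h.2.2]
      exact hPv ▸ hp
end
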